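/- arXiv:1211.0425 — 4 statements merged into one kernel-verified Lean document; each statement's English description precedes it below -/
import Mathlib

section
/- Let u: D → ℝ be a nonnegative function with finite mean oscillation at 0 ∈ D and integrable on the disk B(0, e^{-1}) ⊆ D. Then there exists a constant C such that for all ε ∈ (0, e^{-e}), ∫_{ε < |z| < e^{-1}} u(z) / (|z| log(1/|z|))² dxdy ≤ C · log log(1/ε). -/
open MeasureTheory Metric Filter

private lemma fmo_harm_sum (n : ℕ) :
    ∑ k ∈ Finset.range n, ((k : ℝ) + 1)⁻¹ ≤ 1 + Real.log n := by
  have h := harmonic_le_one_add_log n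
  have h2 : ((harmonic n : ℚ) : ℝ) = ∑ k ∈ Finset.range n, ((k : ℝ) + 1)⁻¹ := by
    rw [harmonic]; push_cast; ring
  rw [h2] at h; exact h

set_option maxHeartbeats 1000000 in
/-- If `u : D → ℝ` is nonnegative, has finite mean oscillation at `0 ∈ D` and is
integrable on `B(0, e⁻¹) ⊆ D`, then there is a constant `C` such that for all
`ε ∈ (0, e^{-e})`,
`∫_{ε<|z|<e⁻¹} u(z)/(|z| log(1/|z|))² dxdy ≤ C · log log (1/ε)`. -/
theorem fmo_annulus_integral_estimate
    (D : Set ℂ) (hD : IsOpen D) (h0 : (0 : ℂ) ∈ D)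
    (hball : ball (0 : ℂ) (Real.exp (-1)) ⊆ D)
    (u : ℂ → ℝ) (hpos : ∀ z ∈ D, 0 ≤ u z)
    (hint : IntegrableOn u (ball (0 : ℂ) (Real.exp (-1))))
    (hFMO : IsBoundedUnder (· ≤ ·) (nhdsWithin 0 (Set.Ioi (0 : ℝ)))
      (fun ε : ℝ => (volume (ball (0 : ℂ) ε)).toReal⁻¹ *
        ∫ z in ball (0 : ℂ) ε,
          |u z - (volume (ball (0 : ℂ) ε)).toReal⁻¹ * ∫ w in ball (0 : ℂ) ε, u w|)) :
    ∃ C : ℝ, ∀ ε : ℝ, 0 < ε → ε < Real.exp (-Real.exp 1) →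
      (∫ z in {z : ℂ | ε < ‖z‖ ∧ ‖z‖ < Real.exp (-1)},
          u z / (‖z‖ * Real.log (1 / ‖z‖)) ^ 2)
        ≤ C * Real.log (Real.log (1 / ε)) := by
  classical
  have he1pos : (0:ℝ) < Real.exp (-1) := Real.exp_pos _
  have he1lt : Real.exp (-1) < 1 := by
    rw [show (1:ℝ) = Real.exp 0 by simp]
    exact Real.exp_lt_exp.2 (by norm_num)
  -- extract the FMO bound
  obtain ⟨M₀, hM₀⟩ := hFMO
  rw [eventually_map, eventually_nhdsWithin_iff, Metric.eventually_nhds_iff] at hM₀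
  obtain ⟨δ, hδpos, hδ⟩ := hM₀
  -- mean of u over balls
  set m : ℝ → ℝ := fun r => (volume (ball (0:ℂ) r)).toReal⁻¹ * ∫ z in ball (0:ℂ) r, u z
    with hmdef
  have hosc : ∀ r : ℝ, 0 < r → r < δ →
      (volume (ball (0:ℂ) r)).toReal⁻¹ * (∫ z in ball (0:ℂ) r, |u z - m r|) ≤ M₀ := by
    intro r h1 h2
    have hd : dist r 0 < δ := by rw [Real.dist_eq, sub_zero, abs_of_pos h1]; exact h2
    exact hδ hd h1
  have hπ : (0:ℝ) < Real.pi := Real.pi_pos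
  have hvb : ∀ r : ℝ, 0 ≤ r → (volume (ball (0:ℂ) r)).toReal = Real.pi * r ^ 2 := by
    intro r hr
    rw [Complex.volume_ball, ENNReal.toReal_mul, ENNReal.toReal_pow,
      ENNReal.toReal_ofReal hr, ENNReal.coe_toReal, NNReal.coe_real_pi]
    ring
  have hmrepr : ∀ r : ℝ, 0 < r →
      ∫ z in ball (0:ℂ) r, u z = Real.pi * r ^ 2 * m r := by
    intro r hr
    have h0' : (volume (ball (0:ℂ) r)).toReal = Real.pi * r ^ 2 := hvb r hr.le
    rw [hmdef]
    simp only []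
    rw [h0']
    have : Real.pi * r ^ 2 ≠ 0 := by positivity
    field_simp
  have hmnonneg : ∀ r : ℝ, r ≤ Real.exp (-1) → 0 ≤ m r := by
    intro r hr
    apply mul_nonneg (inv_nonneg.2 ENNReal.toReal_nonneg)
    apply setIntegral_nonneg measurableSet_ball
    intro z hz
    exact hpos z (hball (mem_ball_zero_iff.2 (lt_of_lt_of_le (mem_ball_zero_iff.1 hz) hr)))
  set M := max M₀ 0 with hMdef
  have hMnn : 0 ≤ M := le_max_right _ _
  -- one dyadic step of the mean growth
  have step : ∀ r : ℝ, 0 < r → 2*r < δ → 2*r ≤ Real.exp (-1) → m r ≤ m (2*r) + 4*M := by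
    intro r hr h2δ h2e
    have hsub : ball (0:ℂ) r ⊆ ball (0:ℂ) (2*r) := ball_subset_ball (by linarith)
    have hsub2 : ball (0:ℂ) (2*r) ⊆ ball (0:ℂ) (Real.exp (-1)) := ball_subset_ball h2e
    have hint2 : IntegrableOn u (ball (0:ℂ) (2*r)) := hint.mono_set hsub2
    have hint1 : IntegrableOn u (ball (0:ℂ) r) := hint2.mono_set hsub
    have hconst : IntegrableOn (fun _ : ℂ => m (2*r)) (ball (0:ℂ) r) :=
      integrableOn_const measure_ball_lt_top.ne
    have habs2 : IntegrableOn (fun z => |u z - m (2*r)|) (ball (0:ℂ) (2*r)) :=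
      (hint2.sub (integrableOn_const measure_ball_lt_top.ne)).abs
    have habs1 : IntegrableOn (fun z => |u z - m (2*r)|) (ball (0:ℂ) r) := habs2.mono_set hsub
    have h1 : ∫ z in ball (0:ℂ) r, u z
        ≤ ∫ z in ball (0:ℂ) r, (|u z - m (2*r)| + m (2*r)) := by
      refine setIntegral_mono_on hint1 (habs1.add hconst) measurableSet_ball fun z hz => ?_
      have := le_abs_self (u z - m (2*r)); linarith
    have h2 : ∫ z in ball (0:ℂ) r, (|u z - m (2*r)| + m (2*r)) =
        (∫ z in ball (0:ℂ) r, |u z - m (2*r)|) + Real.pi * r ^ 2 * m (2*r) := by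
      rw [integral_add habs1 hconst, setIntegral_const, measureReal_def, hvb r hr.le, smul_eq_mul]
    have h3 : ∫ z in ball (0:ℂ) r, |u z - m (2*r)|
        ≤ ∫ z in ball (0:ℂ) (2*r), |u z - m (2*r)| :=
      setIntegral_mono_set habs2 (ae_of_all _ fun z => abs_nonneg _)
        (HasSubset.Subset.eventuallyLE hsub)
    have h4 : ∫ z in ball (0:ℂ) (2*r), |u z - m (2*r)| ≤ Real.pi * (2*r) ^ 2 * M := by
      have ho := hosc (2*r) (by linarith) h2δ
      rw [hvb (2*r) (by linarith)] at ho
      have hvpos : (0:ℝ) < Real.pi * (2*r) ^ 2 := by positivity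
      rw [inv_mul_le_iff₀ hvpos] at ho
      have hM0M : M₀ ≤ M := le_max_left _ _
      nlinarith
    have h5 : ∫ z in ball (0:ℂ) r, u z
        ≤ Real.pi * (2*r) ^ 2 * M + Real.pi * r ^ 2 * m (2*r) := by linarith
    have hrpos : (0:ℝ) < Real.pi * r ^ 2 := by positivity
    have hmr : m r = (Real.pi * r ^ 2)⁻¹ * ∫ z in ball (0:ℂ) r, u z := by
      rw [hmdef]; simp only []; rw [hvb r hr.le]
    rw [hmr, inv_mul_le_iff₀ hrpos]
    have e4 : Real.pi * (2*r) ^ 2 * M = 4 * (Real.pi * r ^ 2) * M := by ring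
    nlinarith
  -- dyadic radii
  set ρ := min (δ/2) (Real.exp (-1)/2) with hρdef
  have hρpos : 0 < ρ := lt_min (by linarith) (by linarith)
  have hρδ : ρ ≤ δ/2 := min_le_left _ _
  have hρe : ρ ≤ Real.exp (-1)/2 := min_le_right _ _
  set s : ℕ → ℝ := fun k => ρ / 2 ^ k with hsdef
  have hspos : ∀ k, 0 < s k := fun k => by rw [hsdef]; positivity
  have hsle : ∀ k, s k ≤ ρ := by
    intro k
    rw [hsdef]
    exact div_le_self hρpos.le (one_le_pow₀ one_le_two)
  have hs2 : ∀ k, 2 * s (k+1) = s k := by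
    intro k
    rw [hsdef]
    simp only []
    rw [pow_succ]
    field_simp
  have hsle1 : ∀ k, s k ≤ Real.exp (-1) := fun k => (hsle k).trans (by linarith)
  -- mean growth along dyadic radii
  have hmean : ∀ k : ℕ, m (s k) ≤ m ρ + 4*M*k := by
    intro k
    induction k with
    | zero =>
      have h0 : s 0 = ρ := by rw [hsdef]; simp
      rw [h0]; simp
    | succ n ih =>
      have h := step (s (n+1)) (hspos _) (by rw [hs2 n]; linarith [hsle n]) (by rw [hs2 n]; exact hsle1 n)
      rw [hs2 n] at h
      have : m (s (n+1)) ≤ m ρ + 4*M*n + 4*M := by linarith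
      calc m (s (n+1)) ≤ m ρ + 4*M*n + 4*M := this
        _ = m ρ + 4*M*(n+1) := by ring
        _ = m ρ + 4*M*((n:ℝ)+1) := by norm_num
        _ = m ρ + 4*M*(((n+1 : ℕ)):ℝ) := by push_cast; ring
  -- measurability of the weight and of the annuli
  have habsmeas : Measurable fun z : ℂ => ‖z‖ := continuous_norm.measurable
  have hgmeas : Measurable fun z : ℂ => (‖z‖ * Real.log (1 / ‖z‖)) ^ 2 :=
    (habsmeas.mul (Real.measurable_log.comp (measurable_const.div habsmeas))).pow_const 2
  have hSmeas : ∀ a b : ℝ, MeasurableSet {z : ℂ | a ≤ ‖z‖ ∧ ‖z‖ < b} := by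
    intro a b
    exact habsmeas measurableSet_Ico
  -- the key weighted estimate on an annulus
  have lemW : ∀ a b : ℝ, 0 < a → 0 < b → b ≤ Real.exp (-1) →
      IntegrableOn (fun z => u z / (‖z‖ * Real.log (1 / ‖z‖)) ^ 2)
        {z : ℂ | a ≤ ‖z‖ ∧ ‖z‖ < b} volume ∧
      (∫ z in {z : ℂ | a ≤ ‖z‖ ∧ ‖z‖ < b},
          u z / (‖z‖ * Real.log (1 / ‖z‖)) ^ 2)
        ≤ ((a * Real.log (1/b)) ^ 2)⁻¹ * ∫ z in ball (0:ℂ) b, u z := by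
    intro a b ha hb hbe
    set S := {z : ℂ | a ≤ ‖z‖ ∧ ‖z‖ < b} with hSdef
    have hSb : S ⊆ ball (0:ℂ) b := by
      intro z hz
      rw [mem_ball_zero_iff]
      exact hz.2
    have hSball : S ⊆ ball (0:ℂ) (Real.exp (-1)) := hSb.trans (ball_subset_ball hbe)
    have hlogb : 1 ≤ Real.log (1/b) := by
      rw [Real.le_log_iff_exp_le (by positivity)]
      rw [Real.exp_neg] at hbe
      calc Real.exp 1 = 1 / (Real.exp 1)⁻¹ := by field_simp
        _ ≤ 1 / b := one_div_le_one_div_of_le hb hbe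
    have hc : (0:ℝ) < a * Real.log (1/b) := mul_pos ha (by linarith)
    set c := ((a * Real.log (1/b)) ^ 2)⁻¹ with hcdef
    have hcnn : 0 ≤ c := by positivity
    have hkey : ∀ z ∈ S, u z / (‖z‖ * Real.log (1/‖z‖)) ^ 2 ≤ c * u z := by
      intro z hz
      have hz0 : 0 < ‖z‖ := lt_of_lt_of_le ha hz.1
      have hlogz : Real.log (1/b) ≤ Real.log (1/‖z‖) :=
        Real.log_le_log (by positivity) (one_div_le_one_div_of_le hz0 hz.2.le)
      have hprod : a * Real.log (1/b) ≤ ‖z‖ * Real.log (1/‖z‖) :=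
        mul_le_mul hz.1 hlogz (by linarith) hz0.le
      have hsq : (a * Real.log (1/b)) ^ 2 ≤ (‖z‖ * Real.log (1/‖z‖)) ^ 2 :=
        pow_le_pow_left₀ hc.le hprod 2
      have hu : 0 ≤ u z := hpos z (hball (hSball hz))
      calc u z / (‖z‖ * Real.log (1/‖z‖)) ^ 2
          ≤ u z / (a * Real.log (1/b)) ^ 2 :=
            div_le_div_of_nonneg_left hu (by positivity) hsq
        _ = c * u z := by rw [hcdef, div_eq_mul_inv, mul_comm]
    have huS : IntegrableOn u S := hint.mono_set hSball
    have hbound : IntegrableOn (fun z => c * u z) S := huS.const_mul c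
    have haesm : AEStronglyMeasurable
        (fun z => u z / (‖z‖ * Real.log (1/‖z‖)) ^ 2)
        (volume.restrict S) := by
      have hu : AEMeasurable u (volume.restrict S) := huS.aestronglyMeasurable.aemeasurable
      exact (hu.div hgmeas.aemeasurable).aestronglyMeasurable
    have hunn : ∀ z ∈ S, 0 ≤ u z := fun z hz => hpos z (hball (hSball hz))
    have hfint : IntegrableOn
        (fun z => u z / (‖z‖ * Real.log (1/‖z‖)) ^ 2) S := by
      refine Integrable.mono' hbound haesm ?_
      refine (ae_restrict_iff' (hSmeas a b)).2 (ae_of_all _ fun z hz => ?_)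
      rw [Real.norm_eq_abs, abs_of_nonneg (div_nonneg (hunn z hz) (sq_nonneg _))]
      exact hkey z hz
    refine ⟨hfint, ?_⟩
    calc (∫ z in S, u z / (‖z‖ * Real.log (1/‖z‖)) ^ 2)
        ≤ ∫ z in S, c * u z := setIntegral_mono_on hfint hbound (hSmeas a b) hkey
      _ = c * ∫ z in S, u z := integral_const_mul c u
      _ ≤ c * ∫ z in ball (0:ℂ) b, u z := by
          refine mul_le_mul_of_nonneg_left ?_ hcnn
          refine setIntegral_mono_set (hint.mono_set (ball_subset_ball hbe)) ?_
            (HasSubset.Subset.eventuallyLE hSb)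
          refine (ae_restrict_iff' measurableSet_ball).2 (ae_of_all _ fun z hz => ?_)
          exact hpos z (hball (ball_subset_ball hbe hz))
  -- constants
  set C4 : ℝ := 4 * Real.pi / (Real.log 2) ^ 2 * (m ρ + 4*M) with hC4def
  have hmρnn : 0 ≤ m ρ := hmnonneg ρ (by linarith)
  have hlog2 : (0:ℝ) < Real.log 2 := Real.log_pos one_lt_two
  have hC4nn : 0 ≤ C4 := by
    rw [hC4def]
    apply mul_nonneg (by positivity)
    linarith
  set C0 : ℝ := ((ρ * Real.log (1/Real.exp (-1))) ^ 2)⁻¹ * ∫ z in ball (0:ℂ) (Real.exp (-1)), u z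
    with hC0def
  have hC0nn : 0 ≤ C0 := by
    rw [hC0def]
    apply mul_nonneg (by positivity)
    apply setIntegral_nonneg measurableSet_ball
    intro z hz
    exact hpos z (hball hz)
  -- bound for each dyadic annulus
  have hpiece : ∀ k : ℕ,
      (∫ z in {z : ℂ | s (k+1) ≤ ‖z‖ ∧ ‖z‖ < s k},
          u z / (‖z‖ * Real.log (1 / ‖z‖)) ^ 2)
        ≤ C4 * ((k:ℝ)+1)⁻¹ := by
    intro k
    obtain ⟨_, hW⟩ := lemW (s (k+1)) (s k) (hspos _) (hspos _) (hsle1 k)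
    rw [hmrepr (s k) (hspos k)] at hW
    have hL : ((k:ℝ)+1) * Real.log 2 ≤ Real.log (1 / s k) := by
      have h2k : (2:ℝ) ^ (k+1) ≤ 1 / s k := by
        have h2ρ : 2 * ρ ≤ 1 := by linarith
        have hsk : s k = ρ / 2 ^ k := by rw [hsdef]
        rw [hsk, one_div_div, le_div_iff₀ hρpos, pow_succ]
        have hpk : (0:ℝ) < 2 ^ k := by positivity
        nlinarith [mul_le_mul_of_nonneg_left h2ρ hpk.le]
      calc ((k:ℝ)+1) * Real.log 2 = Real.log ((2:ℝ) ^ (k+1)) := by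
            rw [Real.log_pow]; push_cast; ring
        _ ≤ Real.log (1 / s k) := Real.log_le_log (by positivity) h2k
    have hLpos : 0 < Real.log (1 / s k) := lt_of_lt_of_le (by positivity) hL
    have hmk1 : 0 ≤ m (s k) := hmnonneg _ (hsle1 k)
    have hmk2 : m (s k) ≤ m ρ + 4*M*k := hmean k
    have hknn : (0:ℝ) ≤ (k:ℝ) := Nat.cast_nonneg k
    -- simplify the RHS of hW using s k = 2 * s (k+1)
    have hrhs : ((s (k+1) * Real.log (1 / s k)) ^ 2)⁻¹ * (Real.pi * s k ^ 2 * m (s k))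
        = 4 * Real.pi * m (s k) / (Real.log (1 / s k)) ^ 2 := by
      have h1 : s (k+1) ≠ 0 := (hspos _).ne'
      have h2 : Real.log (1 / s k) ≠ 0 := hLpos.ne'
      have hsq : s k ^ 2 = 4 * s (k+1) ^ 2 := by rw [← hs2 k]; ring
      rw [hsq]
      field_simp
    rw [hrhs] at hW
    refine hW.trans ?_
    rw [div_le_iff₀ (by positivity), hC4def]
    have hLsq : (((k:ℝ)+1) * Real.log 2) ^ 2 ≤ (Real.log (1 / s k)) ^ 2 :=
      pow_le_pow_left₀ (by positivity) hL 2
    have hcore : 4 * Real.pi * m (s k) ≤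
        (4 * Real.pi / (Real.log 2) ^ 2 * (m ρ + 4*M)) * ((k:ℝ)+1)⁻¹ *
          (((k:ℝ)+1) * Real.log 2) ^ 2 := by
      have hexp : (4 * Real.pi / (Real.log 2) ^ 2 * (m ρ + 4*M)) * ((k:ℝ)+1)⁻¹ *
          (((k:ℝ)+1) * Real.log 2) ^ 2 = 4 * Real.pi * ((m ρ + 4*M) * ((k:ℝ)+1)) := by
        have hk1 : ((k:ℝ)+1) ≠ 0 := by positivity
        field_simp
      rw [hexp]
      have : m (s k) ≤ (m ρ + 4*M) * ((k:ℝ)+1) := by nlinarith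
      nlinarith
    have hmono : (4 * Real.pi / (Real.log 2) ^ 2 * (m ρ + 4*M)) * ((k:ℝ)+1)⁻¹ *
          (((k:ℝ)+1) * Real.log 2) ^ 2 ≤
        (4 * Real.pi / (Real.log 2) ^ 2 * (m ρ + 4*M)) * ((k:ℝ)+1)⁻¹ *
          (Real.log (1 / s k)) ^ 2 := by
      apply mul_le_mul_of_nonneg_left hLsq
      apply mul_nonneg _ (by positivity)
      apply mul_nonneg (by positivity)
      linarith
    linarith
  -- the outer region
  have houter := (lemW ρ (Real.exp (-1)) hρpos he1pos le_rfl).2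
  -- cumulative bound by induction
  have hJ : ∀ n : ℕ,
      (∫ z in {z : ℂ | s n ≤ ‖z‖ ∧ ‖z‖ < Real.exp (-1)},
          u z / (‖z‖ * Real.log (1 / ‖z‖)) ^ 2)
        ≤ C0 + C4 * ∑ k ∈ Finset.range n, ((k:ℝ)+1)⁻¹ := by
    intro n
    induction n with
    | zero =>
      have h0 : s 0 = ρ := by rw [hsdef]; simp
      rw [h0]
      simp only [Finset.range_zero, Finset.sum_empty, mul_zero, add_zero]
      rw [hC0def]
      exact houter
    | succ n ih =>
      have hsnlt : s n < Real.exp (-1) := lt_of_le_of_lt (hsle n) (by linarith)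
      have hsmono : s (n+1) ≤ s n := by linarith [hs2 n, hspos (n+1)]
      have hseteq : {z : ℂ | s (n+1) ≤ ‖z‖ ∧ ‖z‖ < Real.exp (-1)} =
          {z : ℂ | s (n+1) ≤ ‖z‖ ∧ ‖z‖ < s n} ∪
          {z : ℂ | s n ≤ ‖z‖ ∧ ‖z‖ < Real.exp (-1)} := by
        ext z
        simp only [Set.mem_setOf_eq, Set.mem_union]
        constructor
        · rintro ⟨h1, h2⟩
          rcases lt_or_ge (‖z‖) (s n) with h | h
          · exact Or.inl ⟨h1, h⟩
          · exact Or.inr ⟨h, h2⟩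
        · rintro (⟨h1, h2⟩ | ⟨h1, h2⟩)
          · exact ⟨h1, h2.trans hsnlt⟩
          · exact ⟨le_trans hsmono h1, h2⟩
      have hdisj : Disjoint {z : ℂ | s (n+1) ≤ ‖z‖ ∧ ‖z‖ < s n}
          {z : ℂ | s n ≤ ‖z‖ ∧ ‖z‖ < Real.exp (-1)} := by
        rw [Set.disjoint_left]
        rintro z ⟨_, h2⟩ ⟨h3, _⟩
        exact absurd h3 (not_le.2 h2)
      rw [hseteq, setIntegral_union hdisj (hSmeas _ _)
        (lemW (s (n+1)) (s n) (hspos _) (hspos _) (hsle1 n)).1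
        (lemW (s n) (Real.exp (-1)) (hspos _) he1pos le_rfl).1]
      calc _ ≤ C4 * ((n:ℝ)+1)⁻¹ + (C0 + C4 * ∑ k ∈ Finset.range n, ((k:ℝ)+1)⁻¹) :=
            add_le_add (hpiece n) ih
        _ = C0 + C4 * ∑ k ∈ Finset.range (n+1), ((k:ℝ)+1)⁻¹ := by
            rw [Finset.sum_range_succ]; ring
  -- final assembly
  refine ⟨C0 + 4*C4, ?_⟩
  intro ε hε hεe
  set L := Real.log (1/ε) with hLdef
  have hLgt : Real.exp 1 < L := by
    rw [hLdef, one_div, Real.log_inv]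
    have hlt := Real.log_lt_log hε hεe
    rw [Real.log_exp] at hlt
    linarith
  have he1gt : (2:ℝ) < Real.exp 1 := by
    have := Real.exp_one_gt_d9; linarith
  have hL2 : (2:ℝ) < L := lt_trans he1gt hLgt
  have hlogL : 1 < Real.log L := by
    rw [Real.lt_log_iff_exp_lt (by linarith)]
    exact hLgt
  set K := Nat.ceil (L / Real.log 2) with hKdef
  have hsK : s (K+1) ≤ ε := by
    have h1 : L ≤ (K:ℝ) * Real.log 2 := by
      have hceil := Nat.le_ceil (L / Real.log 2)
      calc L = L / Real.log 2 * Real.log 2 := by field_simp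
        _ ≤ (K:ℝ) * Real.log 2 := mul_le_mul_of_nonneg_right hceil hlog2.le
    have h2 : (1:ℝ)/ε ≤ 2 ^ (K+1) := by
      have hexpL : Real.exp L = 1/ε := by rw [hLdef, Real.exp_log (by positivity)]
      have hcast : ((K:ℝ)+1) * Real.log 2 = Real.log ((2:ℝ) ^ (K+1)) := by
        rw [Real.log_pow]; push_cast; ring
      calc (1:ℝ)/ε = Real.exp L := hexpL.symm
        _ ≤ Real.exp (((K:ℝ)+1) * Real.log 2) := Real.exp_le_exp.2 (by nlinarith)
        _ = 2 ^ (K+1) := by rw [hcast, Real.exp_log (by positivity)]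
    have hρ1 : ρ ≤ 1 := by linarith
    have hp : (0:ℝ) < 2 ^ (K+1) := by positivity
    have hstep1 : s (K+1) ≤ 1 / 2 ^ (K+1) := by
      have hsk : s (K+1) = ρ / 2 ^ (K+1) := by rw [hsdef]
      rw [hsk]
      gcongr
    have hstep2 : (1:ℝ) / 2 ^ (K+1) ≤ ε := by
      rw [div_le_iff₀ hp]
      have := (div_le_iff₀ hε).1 h2
      linarith
    linarith
  have hsub : {z : ℂ | ε < ‖z‖ ∧ ‖z‖ < Real.exp (-1)} ⊆
      {z : ℂ | s (K+1) ≤ ‖z‖ ∧ ‖z‖ < Real.exp (-1)} :=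
    fun z hz => ⟨le_trans hsK hz.1.le, hz.2⟩
  have hbigint := (lemW (s (K+1)) (Real.exp (-1)) (hspos _) he1pos le_rfl).1
  have hnn : 0 ≤ᵐ[volume.restrict
        {z : ℂ | s (K+1) ≤ ‖z‖ ∧ ‖z‖ < Real.exp (-1)}]
      fun z => u z / (‖z‖ * Real.log (1 / ‖z‖)) ^ 2 := by
    refine (ae_restrict_iff' (hSmeas _ _)).2 (ae_of_all _ fun z hz => ?_)
    have hu : 0 ≤ u z := hpos z (hball (mem_ball_zero_iff.2
      (by exact hz.2)))
    exact div_nonneg hu (sq_nonneg _)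
  have hmono := setIntegral_mono_set hbigint hnn (HasSubset.Subset.eventuallyLE hsub)
  have hK1le : ((K:ℝ)+1) ≤ 3 * L := by
    have hceil : (K:ℝ) < L / Real.log 2 + 1 := Nat.ceil_lt_add_one (by positivity)
    have hdiv : L / Real.log 2 ≤ 1.5 * L := by
      rw [div_le_iff₀ hlog2]
      nlinarith [Real.log_two_gt_d9]
    linarith
  have hlog3 : Real.log 3 ≤ 2 := by
    have he2 : Real.exp 2 = Real.exp 1 * Real.exp 1 := by rw [← Real.exp_add]; norm_num
    have h3 : (3:ℝ) ≤ Real.exp 2 := by nlinarith [Real.exp_one_gt_d9]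
    have hh := Real.log_le_log (by norm_num) h3
    rwa [Real.log_exp] at hh
  have hlogK : Real.log ((K:ℝ)+1) ≤ 2 + Real.log L := by
    calc Real.log ((K:ℝ)+1) ≤ Real.log (3*L) := Real.log_le_log (by positivity) hK1le
      _ = Real.log 3 + Real.log L := Real.log_mul (by norm_num) (by linarith)
      _ ≤ 2 + Real.log L := by linarith
  have hharm := fmo_harm_sum (K+1)
  have hcastK : ((K+1 : ℕ):ℝ) = (K:ℝ)+1 := by push_cast; ring
  rw [hcastK] at hharm
  calc (∫ z in {z : ℂ | ε < ‖z‖ ∧ ‖z‖ < Real.exp (-1)},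
          u z / (‖z‖ * Real.log (1 / ‖z‖)) ^ 2)
      ≤ ∫ z in {z : ℂ | s (K+1) ≤ ‖z‖ ∧ ‖z‖ < Real.exp (-1)},
          u z / (‖z‖ * Real.log (1 / ‖z‖)) ^ 2 := hmono
    _ ≤ C0 + C4 * ∑ k ∈ Finset.range (K+1), ((k:ℝ)+1)⁻¹ := hJ (K+1)
    _ ≤ C0 + C4 * (1 + Real.log ((K:ℝ)+1)) := by
        have := mul_le_mul_of_nonneg_left hharm hC4nn
        linarith
    _ ≤ C0 + C4 * (3 + Real.log L) := by
        have h1 : (1:ℝ) + Real.log ((K:ℝ)+1) ≤ 3 + Real.log L := by linarith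
        have := mul_le_mul_of_nonneg_left h1 hC4nn
        linarith
    _ ≤ (C0 + 4*C4) * Real.log L := by nlinarith
end

section
/- Let Φ: [0,∞] → [0,∞] be non-decreasing and H(t) = log Φ(t). The condition ∫_Δ^∞ dH(t)/t = ∞ (Lebesgue–Stieltjes) for some Δ > 0 is equivalent to the condition ∫_Δ^∞ H(t) dt/t² = ∞ for some Δ > 0. -/
open MeasureTheory ENNReal Set Filter Topology

-- ∫_s^∞ 1/t² dt = 1/s (real version)
lemma integral_inv_sq {s : ℝ} (hs : 0 < s) :
    ∫ t in Set.Ioi s, 1 / t ^ 2 = 1 / s := by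
  have hderiv : ∀ x ∈ Set.Ici s, HasDerivAt (fun t : ℝ => -(1 / t)) (1 / x ^ 2) x := by
    intro x hx
    have hx0 : x ≠ 0 := (hs.trans_le hx).ne'
    simpa [one_div] using (hasDerivAt_inv hx0).fun_neg
  have hpos : ∀ x ∈ Set.Ioi s, 0 ≤ 1 / x ^ 2 := fun x hx => by positivity
  have htend : Tendsto (fun t : ℝ => -(1 / t)) atTop (𝓝 0) := by
    simpa [one_div] using (tendsto_inv_atTop_zero (𝕜 := ℝ)).neg
  have := integral_Ioi_of_hasDerivAt_of_nonneg' hderiv hpos htend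
  simpa using this

lemma integrableOn_inv_sq {s : ℝ} (hs : 0 < s) :
    IntegrableOn (fun t : ℝ => 1 / t ^ 2) (Set.Ioi s) := by
  have hderiv : ∀ x ∈ Set.Ici s, HasDerivAt (fun t : ℝ => -(1 / t)) (1 / x ^ 2) x := by
    intro x hx
    have hx0 : x ≠ 0 := (hs.trans_le hx).ne'
    simpa [one_div] using (hasDerivAt_inv hx0).fun_neg
  have hpos : ∀ x ∈ Set.Ioi s, 0 ≤ 1 / x ^ 2 := fun x hx => by positivity
  have htend : Tendsto (fun t : ℝ => -(1 / t)) atTop (𝓝 0) := by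
    simpa [one_div] using (tendsto_inv_atTop_zero (𝕜 := ℝ)).neg
  exact integrableOn_Ioi_deriv_of_nonneg' hderiv hpos htend

lemma lintegral_inv_sq {s : ℝ} (hs : 0 < s) :
    ∫⁻ t in Set.Ioi s, ENNReal.ofReal (1 / t ^ 2) = ENNReal.ofReal (1 / s) := by
  rw [← ofReal_integral_eq_lintegral_ofReal (integrableOn_inv_sq hs)
    (Filter.Eventually.of_forall fun x => by positivity), integral_inv_sq hs]

lemma fubini_key (H : StieltjesFunction ℝ) {Δ : ℝ} (hΔ : 0 < Δ) :
    ∫⁻ t in Set.Ioi Δ, H.measure (Set.Ioc Δ t) * ENNReal.ofReal (1 / t ^ 2) =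
    ∫⁻ s in Set.Ioi Δ, ENNReal.ofReal (1 / s) ∂H.measure := by
  set μ := H.measure.restrict (Set.Ioi Δ) with hμ
  set ν := volume.restrict (Set.Ioi Δ) with hν
  set f : ℝ → ℝ → ℝ≥0∞ := fun t s =>
    Set.indicator {p : ℝ × ℝ | p.2 ≤ p.1} (fun p => ENNReal.ofReal (1 / p.1 ^ 2)) (t, s) with hf
  have hmeas : Measurable (Function.uncurry f) := by
    apply Measurable.indicator
    · exact (measurable_fst.pow_const 2).const_div 1 |>.ennreal_ofReal
    · exact measurableSet_le measurable_snd measurable_fst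
  have step1 : ∀ t ∈ Set.Ioi Δ,
      H.measure (Set.Ioc Δ t) * ENNReal.ofReal (1 / t ^ 2) = ∫⁻ s, f t s ∂μ := by
    intro t _
    have : ∫⁻ s, f t s ∂μ
        = ∫⁻ s, (Set.Iic t).indicator (fun _ => ENNReal.ofReal (1 / t ^ 2)) s ∂μ := by
      apply lintegral_congr; intro s
      by_cases h : s ≤ t <;> simp [hf, Set.indicator, h]
    rw [this, lintegral_indicator_const measurableSet_Iic, hμ,
      Measure.restrict_apply measurableSet_Iic, Set.Iic_inter_Ioi, mul_comm]
  have step2 : ∀ s ∈ Set.Ioi Δ, ∫⁻ t, f t s ∂ν = ENNReal.ofReal (1 / s) := by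
    intro s hs
    have : ∫⁻ t, f t s ∂ν
        = ∫⁻ t, (Set.Ici s).indicator (fun t => ENNReal.ofReal (1 / t ^ 2)) t ∂ν := by
      apply lintegral_congr; intro t
      by_cases h : s ≤ t <;> simp [hf, Set.indicator, h]
    rw [this, hν, lintegral_indicator measurableSet_Ici,
      Measure.restrict_restrict measurableSet_Ici]
    have h1 : Set.Ici s ∩ Set.Ioi Δ = Set.Ici s := by
      apply Set.inter_eq_left.2
      exact fun x hx => Set.mem_Ioi.2 (lt_of_lt_of_le hs hx)
    rw [h1, ← MeasureTheory.restrict_Ioi_eq_restrict_Ici]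
    exact lintegral_inv_sq (hΔ.trans hs)
  calc ∫⁻ t in Set.Ioi Δ, H.measure (Set.Ioc Δ t) * ENNReal.ofReal (1 / t ^ 2)
      = ∫⁻ t, ∫⁻ s, f t s ∂μ ∂ν := by
        refine setLIntegral_congr_fun measurableSet_Ioi ?_
        exact step1
    _ = ∫⁻ s, ∫⁻ t, f t s ∂ν ∂μ := by
        exact lintegral_lintegral_swap (hmeas.aemeasurable)
    _ = ∫⁻ s in Set.Ioi Δ, ENNReal.ofReal (1 / s) ∂H.measure := by
        rw [hμ]
        refine setLIntegral_congr_fun measurableSet_Ioi ?_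
        exact step2

lemma key_identity (H : StieltjesFunction ℝ) {Δ : ℝ} (hΔ : 0 < Δ) (h0 : 0 ≤ H Δ) :
    ∫⁻ t in Set.Ioi Δ, ENNReal.ofReal (H t / t ^ 2) =
    ENNReal.ofReal (H Δ) * ENNReal.ofReal (1 / Δ) +
      ∫⁻ s in Set.Ioi Δ, ENNReal.ofReal (1 / s) ∂H.measure := by
  have hpt : ∀ t ∈ Set.Ioi Δ, ENNReal.ofReal (H t / t ^ 2) =
      ENNReal.ofReal (H Δ) * ENNReal.ofReal (1 / t ^ 2) +
        H.measure (Set.Ioc Δ t) * ENNReal.ofReal (1 / t ^ 2) := by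
    intro t ht
    have hHt : 0 ≤ H t := h0.trans (H.mono (le_of_lt ht))
    have h1 : H t / t ^ 2 = H t * (1 / t ^ 2) := by ring
    rw [h1, ENNReal.ofReal_mul hHt, H.measure_Ioc, ← add_mul,
      ← ENNReal.ofReal_add h0 (sub_nonneg.2 (H.mono (le_of_lt ht)))]
    ring_nf
  rw [setLIntegral_congr_fun measurableSet_Ioi hpt,
    lintegral_add_left (by measurability), lintegral_const_mul _ (by measurability),
    lintegral_inv_sq hΔ, fubini_key H hΔ]

lemma tail_infinite {ν : Measure ℝ} {f : ℝ → ℝ≥0∞} {a b : ℝ} (hab : a ≤ b)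
    (hfin : ∫⁻ x in Set.Ioc a b, f x ∂ν ≠ ∞) (htot : ∫⁻ x in Set.Ioi a, f x ∂ν = ∞) :
    ∫⁻ x in Set.Ioi b, f x ∂ν = ∞ := by
  rw [← Set.Ioc_union_Ioi_eq_Ioi hab,
    lintegral_union measurableSet_Ioi Set.Ioc_disjoint_Ioi_same] at htot
  by_contra h
  exact (ENNReal.add_ne_top.2 ⟨hfin, h⟩) htot

lemma measure_Ioi_le (H : StieltjesFunction ℝ) (hneg : ∀ x : ℝ, H x ≤ 0) (Δ : ℝ) :
    H.measure (Set.Ioi Δ) ≤ ENNReal.ofReal (-H Δ) := by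
  have hU : Set.Ioi Δ = ⋃ n : ℕ, Set.Ioc Δ (Δ + n) := by
    ext x
    simp only [Set.mem_Ioi, Set.mem_iUnion, Set.mem_Ioc]
    constructor
    · intro hx
      obtain ⟨n, hn⟩ := exists_nat_ge (x - Δ)
      exact ⟨n, hx, by linarith⟩
    · rintro ⟨n, hn, -⟩; exact hn
  have hdir : Directed (· ⊆ ·) fun n : ℕ => Set.Ioc Δ (Δ + n) := fun m n =>
    ⟨max m n, Set.Ioc_subset_Ioc_right (by simp [le_max_left]),
      Set.Ioc_subset_Ioc_right (by simp [le_max_right])⟩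
  rw [hU, hdir.measure_iUnion]
  exact iSup_le fun n => by
    rw [H.measure_Ioc]
    exact ENNReal.ofReal_le_ofReal (by linarith [hneg (Δ + n)])

/-- Let `Φ : [0,∞) → [0,∞)` be non-decreasing and `H(t) = log Φ(t)` (given as a
Stieltjes function). Then the Lebesgue–Stieltjes integral `∫_Δ^∞ dH(t)/t` is
infinite for some `Δ > 0` if and only if the Lebesgue integral
`∫_Δ^∞ H(t) dt/t²` is infinite for some `Δ > 0`. -/
theorem stieltjes_integral_infinite_iff_integral_div_sq_infinite
    (Φ : ℝ → ℝ) (hΦmono : MonotoneOn Φ (Set.Ici 0)) (hΦpos : ∀ t ≥ 0, 0 ≤ Φ t)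
    (H : StieltjesFunction ℝ) (hH : ∀ t : ℝ, 0 < t → H t = Real.log (Φ t)) :
    (∃ Δ : ℝ, 0 < Δ ∧ ∫⁻ t in Set.Ioi Δ, ENNReal.ofReal (1 / t) ∂H.measure = ∞) ↔
    (∃ Δ : ℝ, 0 < Δ ∧ ∫⁻ t in Set.Ioi Δ, ENNReal.ofReal (H t / t ^ 2) = ∞) := by
  constructor
  · rintro ⟨Δ, hΔ, hint⟩
    by_cases hex : ∃ T, 0 < T ∧ 0 ≤ H T
    · obtain ⟨T, hT, hHT⟩ := hex
      set Δ' := max Δ T with hΔ'def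
      have hΔΔ' : Δ ≤ Δ' := le_max_left _ _
      have hΔ' : (0:ℝ) < Δ' := lt_of_lt_of_le hΔ hΔΔ'
      have hHΔ' : 0 ≤ H Δ' := hHT.trans (H.mono (le_max_right _ _))
      have hfin : ∫⁻ s in Set.Ioc Δ Δ', ENNReal.ofReal (1 / s) ∂H.measure ≠ ∞ := by
        have hb : ∀ s ∈ Set.Ioc Δ Δ', ENNReal.ofReal (1 / s) ≤ ENNReal.ofReal (1 / Δ) :=
          fun s hs => ENNReal.ofReal_le_ofReal (one_div_le_one_div_of_le hΔ hs.1.le)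
        have hle : ∫⁻ s in Set.Ioc Δ Δ', ENNReal.ofReal (1 / s) ∂H.measure
            ≤ ENNReal.ofReal (1 / Δ) * H.measure (Set.Ioc Δ Δ') :=
          (setLIntegral_mono measurable_const hb).trans_eq (setLIntegral_const _ _)
        exact ne_top_of_le_ne_top (ENNReal.mul_ne_top ENNReal.ofReal_ne_top
          (by rw [H.measure_Ioc]; exact ENNReal.ofReal_ne_top)) hle
      have htail := tail_infinite hΔΔ' hfin hint
      exact ⟨Δ', hΔ', by rw [key_identity H hΔ' hHΔ', htail]; exact add_top _⟩
    · push_neg at hex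
      have hneg : ∀ x : ℝ, H x ≤ 0 := fun x => (H.mono (le_max_left x 1)).trans
        (hex (max x 1) (lt_of_lt_of_le one_pos (le_max_right _ _))).le
      have hb : ∀ s ∈ Set.Ioi Δ, ENNReal.ofReal (1 / s) ≤ ENNReal.ofReal (1 / Δ) :=
        fun s hs => ENNReal.ofReal_le_ofReal (one_div_le_one_div_of_le hΔ (le_of_lt hs))
      have hle : ∫⁻ s in Set.Ioi Δ, ENNReal.ofReal (1 / s) ∂H.measure
          ≤ ENNReal.ofReal (1 / Δ) * H.measure (Set.Ioi Δ) :=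
        (setLIntegral_mono measurable_const hb).trans_eq (setLIntegral_const _ _)
      exact absurd hint (ne_top_of_le_ne_top (ENNReal.mul_ne_top ENNReal.ofReal_ne_top
        (ne_top_of_le_ne_top ENNReal.ofReal_ne_top (measure_Ioi_le H hneg Δ))) hle)
  · rintro ⟨Δ, hΔ, hint⟩
    by_cases hex : ∃ T, 0 < T ∧ 0 ≤ H T
    · obtain ⟨T, hT, hHT⟩ := hex
      set Δ' := max Δ T with hΔ'def
      have hΔΔ' : Δ ≤ Δ' := le_max_left _ _
      have hΔ' : (0:ℝ) < Δ' := lt_of_lt_of_le hΔ hΔΔ'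
      have hHΔ' : 0 ≤ H Δ' := hHT.trans (H.mono (le_max_right _ _))
      have hfin : ∫⁻ t in Set.Ioc Δ Δ', ENNReal.ofReal (H t / t ^ 2) ≠ ∞ := by
        have hb : ∀ t ∈ Set.Ioc Δ Δ',
            ENNReal.ofReal (H t / t ^ 2) ≤ ENNReal.ofReal (H Δ' / Δ ^ 2) := fun t ht =>
          ENNReal.ofReal_le_ofReal (div_le_div₀ hHΔ' (H.mono ht.2) (pow_pos hΔ 2)
            (pow_le_pow_left₀ hΔ.le ht.1.le 2))
        have hle : ∫⁻ t in Set.Ioc Δ Δ', ENNReal.ofReal (H t / t ^ 2)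
            ≤ ENNReal.ofReal (H Δ' / Δ ^ 2) * volume (Set.Ioc Δ Δ') :=
          (setLIntegral_mono measurable_const hb).trans_eq (setLIntegral_const _ _)
        exact ne_top_of_le_ne_top (ENNReal.mul_ne_top ENNReal.ofReal_ne_top
          (by rw [Real.volume_Ioc]; exact ENNReal.ofReal_ne_top)) hle
      have htail := tail_infinite hΔΔ' hfin hint
      have hid := key_identity H hΔ' hHΔ'
      rw [htail] at hid
      refine ⟨Δ', hΔ', ?_⟩
      by_contra h
      exact (ENNReal.add_ne_top.2
        ⟨ENNReal.mul_ne_top ENNReal.ofReal_ne_top ENNReal.ofReal_ne_top, h⟩) hid.symm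
    · push_neg at hex
      exfalso
      have hz : ∀ t ∈ Set.Ioi Δ, ENNReal.ofReal (H t / t ^ 2) = (0:ℝ≥0∞) := fun t ht =>
        ENNReal.ofReal_eq_zero.2 (div_nonpos_of_nonpos_of_nonneg
          (hex t (hΔ.trans ht)).le (sq_nonneg t))
      rw [setLIntegral_congr_fun measurableSet_Ioi hz,
        lintegral_zero] at hint
      exact ENNReal.zero_ne_top hint
end

section
/- Let Q: 𝔹 → [0,∞] be a measurable function on the unit disk 𝔹 ⊆ ℂ with ∫_𝔹 Φ(Q(z)) dxdy < ∞, where Φ: [0,∞] → [0,∞] is a non-decreasing convex function satisfying ∫_δ^∞ dτ / (τ Φ⁻¹(τ)) = ∞ for some δ > Φ(0). Then ∫_0^1 dr / (r q(r)) = ∞, where q(r) is the average of Q over the circle |z| = r. -/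
open MeasureTheory ENNReal Metric

/-- The generalized inverse (restricted to `t ≥ 0`, with `inf ∅ = ∞`) of a real
function, valued in `[0,∞]`. -/
noncomputable def genInvR (G : ℝ → ℝ) (τ : ℝ) : ℝ≥0∞ :=
  sInf (ENNReal.ofReal '' {t : ℝ | 0 ≤ t ∧ τ ≤ G t})

namespace CMIaux

open Real


lemma genInvR_mono (Φ : ℝ → ℝ) {τ₁ τ₂ : ℝ} (h : τ₁ ≤ τ₂) : genInvR Φ τ₁ ≤ genInvR Φ τ₂ := by
  apply sInf_le_sInf
  apply Set.image_mono
  intro t ht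
  exact ⟨ht.1, h.trans ht.2⟩

lemma le_genInvR (Φ : ℝ → ℝ) (hΦmono : MonotoneOn Φ (Set.Ici 0)) {t τ : ℝ}
    (ht : 0 ≤ t) (hlt : Φ t < τ) : ENNReal.ofReal t ≤ genInvR Φ τ := by
  apply le_sInf
  rintro x ⟨s, ⟨hs0, hsτ⟩, rfl⟩
  apply ENNReal.ofReal_le_ofReal
  by_contra hc
  push_neg at hc
  have := hΦmono hs0 ht hc.le
  linarith

lemma genInvR_pos (Φ : ℝ → ℝ) (hΦconv : ConvexOn ℝ (Set.Ici 0) Φ) {τ : ℝ} (hτ : Φ 0 < τ) :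
    0 < genInvR Φ τ := by
  set ε := min 1 ((τ - Φ 0) / (2 * (|Φ 1 - Φ 0| + 1))) with hεdef
  have hε0 : 0 < ε := lt_min one_pos (div_pos (by linarith) (by positivity))
  have key : ENNReal.ofReal ε ≤ genInvR Φ τ := by
    apply le_sInf
    rintro x ⟨s, ⟨hs0, hsτ⟩, rfl⟩
    apply ENNReal.ofReal_le_ofReal
    by_contra hc
    push_neg at hc
    have hs1 : s ≤ 1 := (hc.trans_le (min_le_left _ _)).le
    have hcv := hΦconv.2 (Set.self_mem_Ici) (by norm_num : (1:ℝ) ∈ Set.Ici 0)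
      (by linarith : (0:ℝ) ≤ 1 - s) hs0 (by ring)
    simp only [smul_eq_mul, mul_zero, mul_one, zero_add] at hcv
    -- hcv : Φ s ≤ (1 - s) * Φ 0 + s * Φ 1
    have h2 : s < (τ - Φ 0) / (2 * (|Φ 1 - Φ 0| + 1)) := hc.trans_le (min_le_right _ _)
    have h3 : s * (Φ 1 - Φ 0) ≤ s * (|Φ 1 - Φ 0| + 1) := by
      apply mul_le_mul_of_nonneg_left _ hs0
      have := le_abs_self (Φ 1 - Φ 0); linarith
    have h4 : s * (|Φ 1 - Φ 0| + 1) < (τ - Φ 0) / 2 := by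
      have habs : (0:ℝ) < |Φ 1 - Φ 0| + 1 := by positivity
      calc s * (|Φ 1 - Φ 0| + 1) < ((τ - Φ 0) / (2 * (|Φ 1 - Φ 0| + 1))) * (|Φ 1 - Φ 0| + 1) := by
            exact mul_lt_mul_of_pos_right h2 habs
        _ = (τ - Φ 0) / 2 := by field_simp
    nlinarith
  exact lt_of_lt_of_le (ENNReal.ofReal_pos.mpr hε0) key

lemma genInvR_lt_top (Φ : ℝ → ℝ) {τ : ℝ} (h : ∃ t, 0 ≤ t ∧ τ ≤ Φ t) : genInvR Φ τ < ⊤ := by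
  obtain ⟨t, ht0, htτ⟩ := h
  exact lt_of_le_of_lt (sInf_le ⟨t, ⟨ht0, htτ⟩, rfl⟩) ENNReal.ofReal_lt_top


variable {Φ : ℝ → ℝ}

-- upper bound for integral over Ioc δ T of the integrand, by a constant
lemma integral_Ioc_lt_top (hΦconv : ConvexOn ℝ (Set.Ici 0) Φ) (hΦ0 : 0 ≤ Φ 0)
    {δ T : ℝ} (hδ : Φ 0 < δ) (hT : δ ≤ T)
    (hpos : ∀ τ : ℝ, Φ 0 < τ → 0 < genInvR Φ τ)
    (hmono : ∀ τ₁ τ₂ : ℝ, τ₁ ≤ τ₂ → genInvR Φ τ₁ ≤ genInvR Φ τ₂) :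
    ∫⁻ τ in Set.Ioc δ T, 1 / (ENNReal.ofReal τ * genInvR Φ τ) < ⊤ := by
  set C : ℝ≥0∞ := (ENNReal.ofReal δ * genInvR Φ δ)⁻¹ with hC
  have hδ0 : 0 < δ := lt_of_le_of_lt hΦ0 hδ
  have hCne : C < ⊤ := by
    rw [hC, ENNReal.inv_lt_top]
    exact ENNReal.mul_pos (by simp [ENNReal.ofReal_pos, hδ0]) (hpos δ hδ).ne'
  calc ∫⁻ τ in Set.Ioc δ T, 1 / (ENNReal.ofReal τ * genInvR Φ τ)
      ≤ ∫⁻ _ in Set.Ioc δ T, C := by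
        apply lintegral_mono_ae
        filter_upwards [ae_restrict_mem measurableSet_Ioc] with τ hτ
        rw [one_div, hC]
        apply ENNReal.inv_le_inv'
        exact mul_le_mul' (ENNReal.ofReal_le_ofReal hτ.1.le) (hmono _ _ hτ.1.le)
    _ = C * volume (Set.Ioc δ T) := setLIntegral_const _ _
    _ < ⊤ := ENNReal.mul_lt_top hCne (by rw [Real.volume_Ioc]; exact ENNReal.ofReal_lt_top)

lemma unbounded (hΦconv : ConvexOn ℝ (Set.Ici 0) Φ) (hΦ0 : 0 ≤ Φ 0)
    {δ : ℝ} (hδ : Φ 0 < δ)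
    (hpos : ∀ τ : ℝ, Φ 0 < τ → 0 < genInvR Φ τ)
    (hmono : ∀ τ₁ τ₂ : ℝ, τ₁ ≤ τ₂ → genInvR Φ τ₁ ≤ genInvR Φ τ₂)
    (hdiv : ∫⁻ τ in Set.Ioi δ, 1 / (ENNReal.ofReal τ * genInvR Φ τ) = ⊤) :
    ∀ M : ℝ, ∃ t, 0 ≤ t ∧ M ≤ Φ t := by
  intro M
  by_contra hcon
  push_neg at hcon
  set M' := max M (δ + 1) with hM'
  have hδM : δ ≤ M' := le_trans (by linarith) (le_max_right _ _)
  have hsplit : Set.Ioc δ M' ∪ Set.Ioi M' = Set.Ioi δ := Set.Ioc_union_Ioi_eq_Ioi hδM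
  have hzero : ∫⁻ τ in Set.Ioi M', 1 / (ENNReal.ofReal τ * genInvR Φ τ) = 0 := by
    have : ∀ τ ∈ Set.Ioi M', 1 / (ENNReal.ofReal τ * genInvR Φ τ) = 0 := by
      intro τ hτ
      have hτ0 : 0 < τ := by have := le_max_right M (δ + 1); simp only [Set.mem_Ioi] at hτ; linarith [hΦ0, hδ]
      have hemp : {t : ℝ | 0 ≤ t ∧ τ ≤ Φ t} = ∅ := by
        ext t; simp only [Set.mem_setOf_eq, Set.mem_empty_iff_false, iff_false, not_and]
        intro ht0
        have := hcon t ht0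
        simp only [Set.mem_Ioi] at hτ
        have : Φ t < M := this
        have : M ≤ M' := le_max_left _ _
        linarith
      rw [genInvR, hemp]
      simp only [Set.image_empty, _root_.sInf_empty]
      rw [ENNReal.mul_top (by simp [ENNReal.ofReal_pos.mpr hτ0, ne_eq, ENNReal.ofReal_eq_zero]; linarith)]
      simp
    apply le_antisymm _ zero_le
    calc ∫⁻ τ in Set.Ioi M', 1 / (ENNReal.ofReal τ * genInvR Φ τ)
        ≤ ∫⁻ _ in Set.Ioi M', 0 := by
          apply lintegral_mono_ae
          filter_upwards [ae_restrict_mem measurableSet_Ioi] with τ hτ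
          rw [this τ hτ]
      _ = 0 := by simp
  have := integral_Ioc_lt_top hΦconv hΦ0 hδ hδM hpos hmono
  rw [← hsplit, lintegral_union measurableSet_Ioi (Set.Ioc_disjoint_Ioi le_rfl), hzero, add_zero] at hdiv
  exact absurd hdiv this.ne

lemma linear_minorant (hΦconv : ConvexOn ℝ (Set.Ici 0) Φ)
    (hΦmono : MonotoneOn Φ (Set.Ici 0)) (hΦpos : ∀ t ≥ 0, 0 ≤ Φ t)
    (hub : ∀ M : ℝ, ∃ t, 0 ≤ t ∧ M ≤ Φ t) :
    ∃ c d : ℝ, 0 < c ∧ ∀ t ≥ (0:ℝ), t ≤ c * Φ t + d := by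
  obtain ⟨t₁, ht₁0, ht₁⟩ := hub (Φ 1 + 1)
  have ht₁1 : 1 < t₁ := by
    by_contra h
    push_neg at h
    have := hΦmono ht₁0 (by norm_num : (1:ℝ) ∈ Set.Ici 0) h
    linarith
  set σ := (Φ t₁ - Φ 1) / (t₁ - 1) with hσdef
  have hσ : 0 < σ := div_pos (by linarith) (by linarith)
  refine ⟨σ⁻¹, t₁ + 1 + |Φ 1| / σ, inv_pos.mpr hσ, ?_⟩
  intro t ht
  have hinvσ : 0 ≤ σ⁻¹ * Φ t := mul_nonneg (inv_pos.mpr hσ).le (hΦpos t ht)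
  have habs : 0 ≤ |Φ 1| / σ := div_nonneg (abs_nonneg _) hσ.le
  rcases le_or_gt t t₁ with hle | hgt
  · linarith
  · have hsec := hΦconv.secant_mono (a := 1) (x := t₁) (y := t)
      (by norm_num : (1:ℝ) ∈ Set.Ici 0) (Set.mem_Ici.mpr ht₁0) (Set.mem_Ici.mpr ht)
      (by linarith) (by linarith) (by linarith)
    -- hsec : (Φ t₁ - Φ 1) / (t₁ - 1) ≤ (Φ t - Φ 1) / (t - 1)
    have ht1 : (0:ℝ) < t - 1 := by linarith
    have key : σ * (t - 1) ≤ Φ t - Φ 1 := (le_div_iff₀ ht1).mp hsec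
    have h7 : t - 1 ≤ (Φ t - Φ 1) / σ := (le_div_iff₀ hσ).mpr (by nlinarith)
    have h8 : (Φ t - Φ 1) / σ ≤ Φ t / σ + |Φ 1| / σ := by
      have hna : -(Φ 1) / σ ≤ |Φ 1| / σ := by gcongr; exact neg_le_abs _
      have he : (Φ t - Φ 1) / σ = Φ t / σ + -(Φ 1) / σ := by ring
      linarith
    have h9 : Φ t / σ = σ⁻¹ * Φ t := by rw [div_eq_inv_mul]
    linarith

lemma continuousOn (hΦconv : ConvexOn ℝ (Set.Ici 0) Φ) (hΦmono : MonotoneOn Φ (Set.Ici 0)) :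
    ContinuousOn Φ (Set.Ici 0) := by
  have hIoi : ContinuousOn Φ (Set.Ioi 0) :=
    (hΦconv.subset Set.Ioi_subset_Ici_self (convex_Ioi 0)).continuousOn isOpen_Ioi
  intro x hx
  rcases eq_or_lt_of_le (Set.mem_Ici.mp hx) with h0 | h0
  · subst h0
    have hupper : ∀ t ∈ Set.Ici (0:ℝ) ∩ Set.Iic 1, Φ t ≤ Φ 0 + t * (Φ 1 - Φ 0) := by
      intro t ⟨ht0, ht1⟩
      have hcv := hΦconv.2 Set.self_mem_Ici (by norm_num : (1:ℝ) ∈ Set.Ici 0)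
        (by simp at ht1 ⊢; linarith : (0:ℝ) ≤ 1 - t) (Set.mem_Ici.mp ht0) (by ring)
      simp only [smul_eq_mul, mul_zero, mul_one, zero_add] at hcv
      calc Φ t ≤ (1 - t) * Φ 0 + t * Φ 1 := hcv
        _ = Φ 0 + t * (Φ 1 - Φ 0) := by ring
    have hlower : ∀ t ∈ Set.Ici (0:ℝ), Φ 0 ≤ Φ t := fun t ht =>
      hΦmono Set.self_mem_Ici ht (Set.mem_Ici.mp ht)
    unfold ContinuousWithinAt
    have hg : Filter.Tendsto (fun t : ℝ => Φ 0 + t * (Φ 1 - Φ 0)) (nhdsWithin 0 (Set.Ici 0)) (nhds (Φ 0)) := by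
      have : Filter.Tendsto (fun t : ℝ => Φ 0 + t * (Φ 1 - Φ 0)) (nhds 0) (nhds (Φ 0 + 0 * (Φ 1 - Φ 0))) :=
        (continuous_const.add (continuous_id.mul continuous_const)).tendsto 0
      simpa using this.mono_left nhdsWithin_le_nhds
    apply tendsto_of_tendsto_of_tendsto_of_le_of_le' tendsto_const_nhds hg
    · filter_upwards [self_mem_nhdsWithin] with t ht using hlower t ht
    · have h1 : Set.Iic (1:ℝ) ∈ nhdsWithin (0:ℝ) (Set.Ici 0) :=
        nhdsWithin_le_nhds (Iic_mem_nhds one_pos)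
      filter_upwards [self_mem_nhdsWithin, h1] with t ht ht1 using hupper t ⟨ht, ht1⟩
  · exact ((hIoi x h0).continuousAt (Ioi_mem_nhds h0)).continuousWithinAt



lemma polar (f : ℂ → ℝ≥0∞) (hf : Measurable f) :
    ∫⁻ r in Set.Ioo (0:ℝ) 1, ENNReal.ofReal r *
      ∫⁻ θ in Set.Ioo (-π) π, f (↑r * Complex.exp (↑θ * Complex.I))
    ≤ ∫⁻ z in ball (0:ℂ) 1, f z := by
  set s : Set (ℝ × ℝ) := Set.Ioo (0:ℝ) 1 ×ˢ Set.Ioo (-π) π with hsdef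
  have hs : MeasurableSet s := measurableSet_Ioo.prod measurableSet_Ioo
  set f' : ℝ × ℝ → (ℝ × ℝ →L[ℝ] ℝ × ℝ) := fun p =>
    LinearMap.toContinuousLinearMap (Matrix.toLin (Module.Basis.finTwoProd ℝ) (Module.Basis.finTwoProd ℝ)
      !![Real.cos p.2, -p.1 * Real.sin p.2; Real.sin p.2, p.1 * Real.cos p.2]) with hf'def
  have hder : ∀ p ∈ s, HasFDerivWithinAt polarCoord.symm (f' p) s p := fun p _ =>
    (hasFDerivAt_polarCoord_symm p).hasFDerivWithinAt
  have hsub : s ⊆ polarCoord.target := by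
    rw [polarCoord_target]
    exact Set.prod_mono Set.Ioo_subset_Ioi_self subset_rfl
  have hinj : Set.InjOn polarCoord.symm s := by
    apply polarCoord.symm.injOn.mono
    rwa [OpenPartialHomeomorph.symm_source]
  have hdet : ∀ p : ℝ × ℝ, (f' p).det = p.1 := by
    intro p
    conv_rhs => rw [← one_mul p.1, ← cos_sq_add_sin_sq p.2]
    simp only [hf'def, neg_mul, LinearMap.det_toContinuousLinearMap, LinearMap.det_toLin,
      Matrix.det_fin_two_of, sub_neg_eq_add]
    ring
  have hcomp : ∀ p : ℝ × ℝ, Complex.measurableEquivRealProd.symm (polarCoord.symm p)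
      = (p.1 : ℂ) * Complex.exp (↑p.2 * Complex.I) := by
    intro p
    rw [Complex.exp_mul_I]
    rw [show polarCoord.symm p = (p.1 * Real.cos p.2, p.1 * Real.sin p.2) from rfl]
    rw [Complex.measurableEquivRealProd_symm_apply]
    apply Complex.ext <;> simp <;>
      first
        | exact Or.inl (Complex.cos_ofReal_re _).symm
        | exact Or.inl (Complex.sin_ofReal_re _).symm
  have key := lintegral_image_eq_lintegral_abs_det_fderiv_mul volume hs hder hinj
    (fun q => f (Complex.measurableEquivRealProd.symm q))
  have htrans := (Complex.volume_preserving_equiv_real_prod.symm).setLIntegral_comp_emb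
    Complex.measurableEquivRealProd.symm.measurableEmbedding f (polarCoord.symm '' s)
  have himage : Complex.measurableEquivRealProd.symm '' (polarCoord.symm '' s) ⊆ ball (0:ℂ) 1 := by
    rintro z ⟨q, ⟨p, hp, rfl⟩, rfl⟩
    rw [mem_ball_zero_iff,
      show Complex.measurableEquivRealProd.symm (polarCoord.symm p) = Complex.polarCoord.symm p
        from rfl, Complex.norm_polarCoord_symm p]
    rw [hsdef] at hp
    rw [abs_of_pos hp.1.1]
    exact hp.1.2
  have hX : ∫⁻ p in s, ENNReal.ofReal p.1 * f ((p.1 : ℂ) * Complex.exp (↑p.2 * Complex.I))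
      ≤ ∫⁻ z in ball (0:ℂ) 1, f z := by
    have e1 : ∫⁻ p in s, ENNReal.ofReal p.1 * f ((p.1 : ℂ) * Complex.exp (↑p.2 * Complex.I))
        = ∫⁻ p in s, ENNReal.ofReal |(f' p).det| *
            (fun q => f (Complex.measurableEquivRealProd.symm q)) (polarCoord.symm p) := by
      apply setLIntegral_congr_fun hs
      intro p hp
      simp only [hdet p, hcomp p]
      rw [abs_of_pos hp.1.1]
    rw [e1, ← key, htrans]
    exact lintegral_mono_set himage
  -- Tonelli
  have hrestrict : (volume : Measure (ℝ × ℝ)).restrict s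
      = (volume.restrict (Set.Ioo (0:ℝ) 1)).prod (volume.restrict (Set.Ioo (-π) π)) := by
    rw [hsdef, Measure.volume_eq_prod, Measure.prod_restrict]
  have hmeas : Measurable fun p : ℝ × ℝ =>
      ENNReal.ofReal p.1 * f ((p.1 : ℂ) * Complex.exp (↑p.2 * Complex.I)) := by
    apply Measurable.mul
    · exact measurable_fst.ennreal_ofReal
    · apply hf.comp
      apply Measurable.mul
      · exact Complex.measurable_ofReal.comp measurable_fst
      · exact Complex.measurable_exp.comp
          ((Complex.measurable_ofReal.comp measurable_snd).mul measurable_const)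
  calc ∫⁻ r in Set.Ioo (0:ℝ) 1, ENNReal.ofReal r *
        ∫⁻ θ in Set.Ioo (-π) π, f (↑r * Complex.exp (↑θ * Complex.I))
      = ∫⁻ r in Set.Ioo (0:ℝ) 1, ∫⁻ θ in Set.Ioo (-π) π,
          ENNReal.ofReal r * f (↑r * Complex.exp (↑θ * Complex.I)) := by
        apply lintegral_congr
        intro r
        rw [lintegral_const_mul' _ _ ENNReal.ofReal_ne_top]
    _ = ∫⁻ p in s, ENNReal.ofReal p.1 * f ((p.1 : ℂ) * Complex.exp (↑p.2 * Complex.I)) := by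
        rw [hrestrict, lintegral_prod _ hmeas.aemeasurable]
    _ ≤ ∫⁻ z in ball (0:ℂ) 1, f z := hX



lemma jensen (Q : ℂ → ℝ) (hQmeas : Measurable Q) (hQpos : ∀ z, 0 ≤ Q z)
    (Φ : ℝ → ℝ) (hΦconv : ConvexOn ℝ (Set.Ici 0) Φ) (hΦpos : ∀ t ≥ 0, 0 ≤ Φ t)
    (hΦcont : ContinuousOn Φ (Set.Ici 0))
    {c d : ℝ} (hc : 0 < c) (hcd : ∀ t ≥ (0:ℝ), t ≤ c * Φ t + d) (r : ℝ)
    (hF : ∫⁻ θ in Set.Ioo (-π) π, ENNReal.ofReal (Φ (Q (↑r * Complex.exp (↑θ * Complex.I)))) ≠ ⊤) :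
    ENNReal.ofReal (Φ ((2 * π)⁻¹ * ∫ θ in (0:ℝ)..(2 * π), Q (↑r * Complex.exp (↑θ * Complex.I))))
      ≤ ENNReal.ofReal ((2 * π)⁻¹) *
        ∫⁻ θ in Set.Ioo (-π) π, ENNReal.ofReal (Φ (Q (↑r * Complex.exp (↑θ * Complex.I)))) := by
  set f : ℝ → ℝ := fun θ => Q (↑r * Complex.exp (↑θ * Complex.I)) with hfdef
  set μθ : Measure ℝ := volume.restrict (Set.Ioo (-π) π) with hμdef
  have hμuniv : μθ Set.univ = ENNReal.ofReal (2 * π) := by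
    rw [hμdef, Measure.restrict_apply_univ, Real.volume_Ioo]
    congr 1; ring
  have hπ : (0:ℝ) < 2 * π := by positivity
  haveI : IsFiniteMeasure μθ := ⟨by rw [hμuniv]; exact ENNReal.ofReal_lt_top⟩
  haveI : NeZero μθ := ⟨by
    intro h
    have h0 : μθ Set.univ = 0 := by rw [h]; rfl
    rw [hμuniv] at h0
    rw [ENNReal.ofReal_eq_zero] at h0
    linarith⟩
  have hfmeas : Measurable f := by
    apply hQmeas.comp
    exact (measurable_const.mul (Complex.measurable_exp.comp
      ((Complex.measurable_ofReal).mul measurable_const)))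
  have hfnn : ∀ θ, 0 ≤ f θ := fun θ => hQpos _
  have hΦf_meas : Measurable fun θ => Φ (f θ) := by
    have hmax : Continuous fun t : ℝ => Φ (max t 0) :=
      hΦcont.comp_continuous (continuous_id.max continuous_const) (fun t => Set.mem_Ici.mpr (le_max_right _ _))
    have : (fun θ => Φ (f θ)) = fun θ => Φ (max (f θ) 0) := by
      funext θ; rw [max_eq_left (hfnn θ)]
    rw [this]
    exact hmax.measurable.comp hfmeas
  have hΦf_int : Integrable (fun θ => Φ (f θ)) μθ := by
    refine ⟨hΦf_meas.aestronglyMeasurable, ?_⟩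
    rw [hasFiniteIntegral_iff_ofReal (Filter.Eventually.of_forall fun θ => hΦpos _ (hfnn θ))]
    exact lt_top_iff_ne_top.mpr hF
  have hf_int : Integrable f μθ := by
    apply Integrable.mono' ((hΦf_int.const_mul c).add (integrable_const d))
      hfmeas.aestronglyMeasurable
    apply Filter.Eventually.of_forall
    intro θ
    rw [Real.norm_of_nonneg (hfnn θ)]
    exact hcd _ (hfnn θ)
  have hJ := hΦconv.map_average_le hΦcont isClosed_Ici
    (Filter.Eventually.of_forall fun θ => Set.mem_Ici.mpr (hfnn θ)) hf_int hΦf_int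
  -- identify averages
  have htR : (μθ Set.univ).toReal = 2 * π := by rw [hμuniv, ENNReal.toReal_ofReal hπ.le]
  have havgf : ⨍ θ, f θ ∂μθ = (2 * π)⁻¹ * ∫ θ in (0:ℝ)..(2 * π), f θ := by
    rw [average_eq, measureReal_def, htR, smul_eq_mul]
    congr 1
    have hper : Function.Periodic f (2 * π) := by
      intro θ
      simp only [hfdef]
      congr 1
      rw [show ((θ + 2 * π : ℝ) : ℂ) * Complex.I = ↑θ * Complex.I + 2 * ↑π * Complex.I by
        push_cast; ring]
      rw [Complex.exp_add]
      have h2pi : Complex.exp (2 * ↑π * Complex.I) = 1 := Complex.exp_two_pi_mul_I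
      rw [h2pi, mul_one]
    have h1 : ∫ θ, f θ ∂μθ = ∫ θ in (-π)..π, f θ := by
      rw [hμdef, intervalIntegral.integral_of_le (by linarith [Real.pi_pos] : -π ≤ π),
        ← integral_Ioc_eq_integral_Ioo]
    rw [h1]
    have := hper.intervalIntegral_add_eq (-π) 0
    simp only [zero_add] at this
    rw [show -π + 2 * π = π by ring] at this
    exact this
  have havgΦ : ⨍ θ, Φ (f θ) ∂μθ = (2 * π)⁻¹ * ∫ θ, Φ (f θ) ∂μθ := by
    rw [average_eq, measureReal_def, htR, smul_eq_mul]
  rw [havgf, havgΦ] at hJ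
  calc ENNReal.ofReal (Φ ((2 * π)⁻¹ * ∫ θ in (0:ℝ)..(2 * π), f θ))
      ≤ ENNReal.ofReal ((2 * π)⁻¹ * ∫ θ, Φ (f θ) ∂μθ) := ENNReal.ofReal_le_ofReal hJ
    _ = ENNReal.ofReal ((2 * π)⁻¹) * ENNReal.ofReal (∫ θ, Φ (f θ) ∂μθ) := by
        rw [ENNReal.ofReal_mul (by positivity)]
    _ = ENNReal.ofReal ((2 * π)⁻¹) *
        ∫⁻ θ in Set.Ioo (-π) π, ENNReal.ofReal (Φ (f θ)) := by
        congr 1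
        rw [ofReal_integral_eq_lintegral_ofReal hΦf_int
          (Filter.Eventually.of_forall fun θ => hΦpos _ (hfnn θ))]



lemma alg (a g c : ℝ≥0∞) (ha0 : a ≠ 0) (hat : a ≠ ⊤) : (a * g)⁻¹ * (a * c) = g⁻¹ * c := by
  rw [ENNReal.mul_inv (Or.inl ha0) (Or.inl hat), mul_mul_mul_comm,
    ENNReal.inv_mul_cancel ha0 hat, one_mul]

end CMIaux


/-- Let `Q : 𝔹 → [0,∞)` be measurable with `∫_𝔹 Φ(Q(z)) dxdy < ∞`, where `Φ` is
non-decreasing and convex with `∫_δ^∞ dτ/(τ Φ⁻¹(τ)) = ∞` for some `δ > Φ(0)`.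
Then `∫_0^1 dr/(r q(r)) = ∞`, where `q(r)` is the mean of `Q` over `|z| = r`. -/
theorem circular_means_integral_infinite
    (Q : ℂ → ℝ) (hQmeas : Measurable Q) (hQpos : ∀ z, 0 ≤ Q z)
    (Φ : ℝ → ℝ) (hΦconv : ConvexOn ℝ (Set.Ici 0) Φ)
    (hΦmono : MonotoneOn Φ (Set.Ici 0)) (hΦpos : ∀ t ≥ 0, 0 ≤ Φ t)
    (hint : ∫⁻ z in ball (0 : ℂ) 1, ENNReal.ofReal (Φ (Q z)) < ∞)
    (hdiv : ∃ δ : ℝ, Φ 0 < δ ∧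
      ∫⁻ τ in Set.Ioi δ, 1 / (ENNReal.ofReal τ * genInvR Φ τ) = ∞) :
    ∫⁻ r in Set.Ioo (0 : ℝ) 1,
      1 / ENNReal.ofReal
        (r * ((2 * Real.pi)⁻¹ *
          ∫ θ in (0 : ℝ)..(2 * Real.pi), Q (r * Complex.exp (θ * Complex.I)))) = ∞ := by
  obtain ⟨δ, hδ, hdiv⟩ := hdiv
  have hΦ0 : (0:ℝ) ≤ Φ 0 := hΦpos 0 le_rfl
  have hpos : ∀ τ : ℝ, Φ 0 < τ → 0 < genInvR Φ τ := fun τ hτ => CMIaux.genInvR_pos Φ hΦconv hτ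
  have hmono : ∀ τ₁ τ₂ : ℝ, τ₁ ≤ τ₂ → genInvR Φ τ₁ ≤ genInvR Φ τ₂ :=
    fun _ _ h => CMIaux.genInvR_mono Φ h
  have hub : ∀ M : ℝ, ∃ t, 0 ≤ t ∧ M ≤ Φ t := CMIaux.unbounded hΦconv hΦ0 hδ hpos hmono hdiv
  have hΦcont : ContinuousOn Φ (Set.Ici 0) := CMIaux.continuousOn hΦconv hΦmono
  obtain ⟨c, d, hc, hcd⟩ := CMIaux.linear_minorant hΦconv hΦmono hΦpos hub
  have hπpos := Real.pi_pos
  set q : ℝ → ℝ := fun r =>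
    (2 * Real.pi)⁻¹ * ∫ θ in (0:ℝ)..(2 * Real.pi), Q (r * Complex.exp (θ * Complex.I)) with hqdef
  show ∫⁻ r in Set.Ioo (0:ℝ) 1, 1 / ENNReal.ofReal (r * q r) = ⊤
  have hqnn : ∀ r, 0 ≤ q r := by
    intro r
    apply mul_nonneg (by positivity)
    apply intervalIntegral.integral_nonneg (by positivity : (0:ℝ) ≤ 2 * Real.pi)
    intro θ _
    exact hQpos _
  set F : ℝ → ℝ≥0∞ := fun r => ∫⁻ θ in Set.Ioo (-Real.pi) Real.pi,
    ENNReal.ofReal (Φ (Q (r * Complex.exp (θ * Complex.I)))) with hFdef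
  have hΦm_cont : Continuous fun t : ℝ => Φ (max t 0) :=
    hΦcont.comp_continuous (continuous_id.max continuous_const)
      (fun t => Set.mem_Ici.mpr (le_max_right _ _))
  have hfball_meas : Measurable fun z : ℂ => ENNReal.ofReal (Φ (Q z)) := by
    have he : (fun z : ℂ => ENNReal.ofReal (Φ (Q z)))
        = fun z => ENNReal.ofReal (Φ (max (Q z) 0)) := by
      funext z; rw [max_eq_left (hQpos z)]
    rw [he]
    exact (hΦm_cont.measurable.comp hQmeas).ennreal_ofReal
  have HP : ∫⁻ r in Set.Ioo (0:ℝ) 1, ENNReal.ofReal r * F r < ⊤ :=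
    lt_of_le_of_lt (CMIaux.polar _ hfball_meas) hint
  have hmap : Measurable fun p : ℝ × ℝ => ((p.1 : ℂ) * Complex.exp ((p.2 : ℂ) * Complex.I)) :=
    (Complex.measurable_ofReal.comp measurable_fst).mul
      (Complex.measurable_exp.comp
        ((Complex.measurable_ofReal.comp measurable_snd).mul measurable_const))
  have hFmeas : Measurable F := by
    apply Measurable.lintegral_prod_right (f := fun (r : ℝ) (θ : ℝ) =>
      ENNReal.ofReal (Φ (Q (r * Complex.exp (θ * Complex.I)))))
    exact hfball_meas.comp hmap
  have hqmeas : Measurable q := by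
    have he : q = fun r : ℝ => (2 * Real.pi)⁻¹ *
        ∫ θ, Q (r * Complex.exp (θ * Complex.I))
          ∂(volume.restrict (Set.Ioc 0 (2 * Real.pi))) := by
      funext r
      simp only [hqdef]
      congr 1
      exact intervalIntegral.integral_of_le (by positivity : (0:ℝ) ≤ 2 * Real.pi)
    rw [he]
    apply measurable_const.mul
    have hsm : StronglyMeasurable fun p : ℝ × ℝ => Q ((p.1 : ℂ) * Complex.exp ((p.2 : ℂ) * Complex.I)) :=
      (hQmeas.comp hmap).stronglyMeasurable
    exact hsm.integral_prod_right'.measurable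
  set Ψ : ℝ → ℝ≥0∞ := fun r => ENNReal.ofReal (Φ (max (q r) 0)) with hΨdef
  have hΨmeas : Measurable Ψ := (hΦm_cont.measurable.comp hqmeas).ennreal_ofReal
  have hΨq : ∀ r, Ψ r = ENNReal.ofReal (Φ (q r)) := by
    intro r
    rw [hΨdef]
    simp only
    rw [max_eq_left (hqnn r)]
  have hprod_meas : Measurable fun r : ℝ => ENNReal.ofReal r * F r :=
    (measurable_id.ennreal_ofReal).mul hFmeas
  have hae1 : ∀ᵐ r ∂(volume.restrict (Set.Ioo (0:ℝ) 1)), ENNReal.ofReal r * F r < ⊤ :=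
    ae_lt_top hprod_meas HP.ne
  have haeJ : ∀ᵐ r ∂(volume.restrict (Set.Ioo (0:ℝ) 1)),
      ENNReal.ofReal r * Ψ r ≤ ENNReal.ofReal ((2 * Real.pi)⁻¹) * (ENNReal.ofReal r * F r) := by
    filter_upwards [hae1, ae_restrict_mem measurableSet_Ioo] with r h1 h2
    have hFne : F r ≠ ⊤ := by
      intro htop
      rw [htop, ENNReal.mul_top
        (by rw [ne_eq, ENNReal.ofReal_eq_zero, not_le]; exact h2.1)] at h1
      exact absurd h1 (lt_irrefl ⊤)
    have hj := CMIaux.jensen Q hQmeas hQpos Φ hΦconv hΦpos hΦcont hc hcd r hFne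
    rw [hΨq r]
    calc ENNReal.ofReal r * ENNReal.ofReal (Φ (q r))
        ≤ ENNReal.ofReal r * (ENNReal.ofReal ((2 * Real.pi)⁻¹) * F r) := mul_le_mul_right hj _
      _ = ENNReal.ofReal ((2 * Real.pi)⁻¹) * (ENNReal.ofReal r * F r) := by ring
  set B := ∫⁻ r in Set.Ioo (0:ℝ) 1, ENNReal.ofReal r * Ψ r with hBdef
  have hB : B ≠ ⊤ := by
    have hle : B ≤ ENNReal.ofReal ((2 * Real.pi)⁻¹) *
        ∫⁻ r in Set.Ioo (0:ℝ) 1, ENNReal.ofReal r * F r := by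
      rw [← lintegral_const_mul' _ _ ENNReal.ofReal_ne_top]
      exact lintegral_mono_ae haeJ
    exact (lt_of_le_of_lt hle (ENNReal.mul_lt_top ENNReal.ofReal_lt_top HP)).ne
  set κ : ℝ := (1 - Real.exp (-1)) / 2 with hκdef
  have hκ : 0 < κ := by
    have hee : Real.exp (-1) < 1 := by
      rw [← Real.exp_zero]
      exact Real.exp_lt_exp.mpr (by norm_num)
    rw [hκdef]; linarith
  set T : ℝ := max (δ + 1) (Real.exp 1 * (B.toReal + 1) / κ) with hTdef
  have hδT : δ < T := lt_of_lt_of_le (by linarith) (le_max_left _ _)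
  have hT0 : 0 < T := by
    have : (0:ℝ) < δ := lt_of_le_of_lt hΦ0 hδ
    linarith
  have hTκ : Real.exp 1 * (B.toReal + 1) ≤ T * κ := by
    have h := le_max_right (δ + 1) (Real.exp 1 * (B.toReal + 1) / κ)
    rw [← hTdef] at h
    exact (div_le_iff₀ hκ).mp h
  set τs : ℕ → ℝ := fun n => T * Real.exp (2 * n) with hτdef
  have hτpos : ∀ n, 0 < τs n := fun n => mul_pos hT0 (Real.exp_pos _)
  set g : ℕ → ℝ≥0∞ := fun n => genInvR Φ (τs n) with hgdef
  -- Part 1: divergence of the series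
  have hdivsum : ∑' n, (g n)⁻¹ = ⊤ := by
    have hsplit : Set.Ioc δ T ∪ Set.Ioi T = Set.Ioi δ := Set.Ioc_union_Ioi_eq_Ioi hδT.le
    have hIoc := CMIaux.integral_Ioc_lt_top hΦconv hΦ0 hδ hδT.le hpos hmono
    have hIoiT : ∫⁻ x in Set.Ioi T, 1 / (ENNReal.ofReal x * genInvR Φ x) = ⊤ := by
      by_contra hne
      rw [← hsplit, lintegral_union measurableSet_Ioi (Set.Ioc_disjoint_Ioi le_rfl)] at hdiv
      exact (ENNReal.add_ne_top.mpr ⟨hIoc.ne, hne⟩) hdiv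
    have hcover : Set.Ioi T ⊆ ⋃ n : ℕ, Set.Ioc (τs n) (τs (n + 1)) := by
      intro x hx
      simp only [Set.mem_Ioi] at hx
      have hex : ∃ n : ℕ, x ≤ τs (n + 1) := by
        obtain ⟨m, hm⟩ := exists_nat_ge (x / T)
        refine ⟨m, ?_⟩
        have h2 : (2 * (((m:ℕ) + 1 : ℕ) : ℝ)) + 1 ≤ Real.exp (2 * (((m:ℕ) + 1 : ℕ) : ℝ)) :=
          Real.add_one_le_exp _
        have h3 : (m : ℝ) ≤ 2 * (((m:ℕ) + 1 : ℕ) : ℝ) + 1 := by push_cast; linarith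
        calc x ≤ (m:ℝ) * T := by
              rw [div_le_iff₀ hT0] at hm; exact hm
          _ ≤ Real.exp (2 * (((m:ℕ) + 1 : ℕ) : ℝ)) * T :=
              mul_le_mul_of_nonneg_right (h3.trans h2) hT0.le
          _ = τs (m + 1) := mul_comm _ _
      refine Set.mem_iUnion.mpr ⟨Nat.find hex, ?_, Nat.find_spec hex⟩
      rcases hn0 : Nat.find hex with _ | m
      · have : τs 0 = T := by
          simp only [hτdef]
          norm_num
        rw [this]
        exact hx
      · have hmin := Nat.find_min hex (by rw [hn0]; exact Nat.lt_succ_self m)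
        push_neg at hmin
        exact hmin
    have hbound : ∀ n : ℕ, ∫⁻ x in Set.Ioc (τs n) (τs (n+1)),
        1 / (ENNReal.ofReal x * genInvR Φ x) ≤ (g n)⁻¹ * ENNReal.ofReal (Real.exp 2 - 1) := by
      intro n
      calc ∫⁻ x in Set.Ioc (τs n) (τs (n+1)), 1 / (ENNReal.ofReal x * genInvR Φ x)
          ≤ ∫⁻ _ in Set.Ioc (τs n) (τs (n+1)), (ENNReal.ofReal (τs n) * g n)⁻¹ := by
            apply lintegral_mono_ae
            filter_upwards [ae_restrict_mem measurableSet_Ioc] with x hx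
            rw [one_div]
            apply ENNReal.inv_le_inv'
            exact mul_le_mul' (ENNReal.ofReal_le_ofReal hx.1.le) (hmono _ _ hx.1.le)
        _ = (ENNReal.ofReal (τs n) * g n)⁻¹ * volume (Set.Ioc (τs n) (τs (n+1))) :=
            setLIntegral_const _ _
        _ = (ENNReal.ofReal (τs n) * g n)⁻¹ *
            (ENNReal.ofReal (τs n) * ENNReal.ofReal (Real.exp 2 - 1)) := by
            rw [Real.volume_Ioc, ← ENNReal.ofReal_mul (hτpos n).le]
            congr 1
            simp only [hτdef]
            have he : Real.exp (2 * ((n+1 : ℕ) : ℝ)) = Real.exp (2 * (n:ℝ)) * Real.exp 2 := by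
              rw [← Real.exp_add]; congr 1; push_cast; ring
            rw [he]; ring
        _ = (g n)⁻¹ * ENNReal.ofReal (Real.exp 2 - 1) :=
            CMIaux.alg _ _ _
              (by rw [ne_eq, ENNReal.ofReal_eq_zero, not_le]; exact hτpos n)
              ENNReal.ofReal_ne_top
    have htop : (⊤:ℝ≥0∞) ≤ ∑' n, (g n)⁻¹ * ENNReal.ofReal (Real.exp 2 - 1) := by
      rw [← hIoiT]
      calc ∫⁻ x in Set.Ioi T, 1 / (ENNReal.ofReal x * genInvR Φ x)
          ≤ ∫⁻ x in ⋃ n : ℕ, Set.Ioc (τs n) (τs (n+1)),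
              1 / (ENNReal.ofReal x * genInvR Φ x) := lintegral_mono_set hcover
        _ ≤ ∑' n, ∫⁻ x in Set.Ioc (τs n) (τs (n+1)),
              1 / (ENNReal.ofReal x * genInvR Φ x) := lintegral_iUnion_le _ _
        _ ≤ ∑' n, (g n)⁻¹ * ENNReal.ofReal (Real.exp 2 - 1) := ENNReal.tsum_le_tsum hbound
    rw [ENNReal.tsum_mul_right] at htop
    by_contra hS
    exact (ENNReal.mul_ne_top hS ENNReal.ofReal_ne_top) (top_le_iff.mp htop)
  -- Part 2: lower bound for the target integral
  have hlower : ENNReal.ofReal κ * ∑' n, (g n)⁻¹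
      ≤ ∫⁻ r in Set.Ioo (0:ℝ) 1, 1 / ENNReal.ofReal (r * q r) := by
    set I : ℕ → Set ℝ := fun n =>
      Set.Ioo (Real.exp (-((n:ℝ) + 1))) (Real.exp (-(n:ℝ))) with hIdef
    have hImeas : ∀ n, MeasurableSet (I n) := fun n => measurableSet_Ioo
    have hIsub : ∀ n : ℕ, I n ⊆ Set.Ioo (0:ℝ) 1 := by
      intro n x hx
      refine ⟨lt_trans (Real.exp_pos _) hx.1, lt_of_lt_of_le hx.2 ?_⟩
      rw [← Real.exp_zero]
      apply Real.exp_le_exp.mpr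
      simp
    have hdisj : Pairwise (Function.onFun Disjoint I) := by
      have key : ∀ m n : ℕ, m < n → Disjoint (I m) (I n) := by
        intro m n hmn
        rw [Set.disjoint_left]
        intro x hxm hxn
        have h3 : Real.exp (-(n:ℝ)) ≤ Real.exp (-((m:ℝ) + 1)) := by
          apply Real.exp_le_exp.mpr
          have : (m:ℝ) + 1 ≤ n := by exact_mod_cast hmn
          linarith
        have := hxm.1
        have := hxn.2
        linarith
      intro m n hmn
      rcases hmn.lt_or_gt with h | h
      · exact key m n h
      · exact (key n m h).symm
    have hμI : ∀ n : ℕ, volume (I n)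
        = ENNReal.ofReal (Real.exp (-(n:ℝ)) * κ) + ENNReal.ofReal (Real.exp (-(n:ℝ)) * κ) := by
      intro n
      rw [show I n = Set.Ioo (Real.exp (-((n:ℝ) + 1))) (Real.exp (-(n:ℝ))) from rfl]
      rw [Real.volume_Ioo, ← ENNReal.ofReal_add (by positivity) (by positivity)]
      congr 1
      have he : Real.exp (-((n:ℝ) + 1)) = Real.exp (-(n:ℝ)) * Real.exp (-1) := by
        rw [← Real.exp_add]; congr 1; ring
      rw [he, hκdef]; ring
    have hcheb : ∀ n : ℕ, (volume.restrict (I n)) {x | ENNReal.ofReal (τs n) ≤ Ψ x}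
        ≤ ENNReal.ofReal (Real.exp (-(n:ℝ)) * κ) := by
      intro n
      have h1 := mul_meas_ge_le_lintegral₀ (μ := volume.restrict (I n))
        hΨmeas.aemeasurable (ENNReal.ofReal (τs n))
      have h2 : ∫⁻ r in I n, Ψ r ≤ ENNReal.ofReal (Real.exp ((n:ℝ) + 1)) * B := by
        calc ∫⁻ r in I n, Ψ r
            ≤ ∫⁻ r in I n, ENNReal.ofReal (Real.exp ((n:ℝ) + 1)) * (ENNReal.ofReal r * Ψ r) := by
              apply lintegral_mono_ae
              filter_upwards [ae_restrict_mem (hImeas n)] with r hr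
              have hone : (1:ℝ≥0∞) ≤ ENNReal.ofReal (Real.exp ((n:ℝ) + 1)) * ENNReal.ofReal r := by
                rw [← ENNReal.ofReal_mul (Real.exp_pos _).le, ← ENNReal.ofReal_one]
                apply ENNReal.ofReal_le_ofReal
                have hee : Real.exp ((n:ℝ) + 1) * Real.exp (-((n:ℝ) + 1)) = 1 := by
                  rw [← Real.exp_add, show (n:ℝ) + 1 + -((n:ℝ) + 1) = 0 by ring, Real.exp_zero]
                nlinarith [hr.1, Real.exp_pos ((n:ℝ) + 1)]
              calc Ψ r = 1 * Ψ r := (one_mul _).symm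
                _ ≤ (ENNReal.ofReal (Real.exp ((n:ℝ) + 1)) * ENNReal.ofReal r) * Ψ r :=
                    mul_le_mul_left hone _
                _ = ENNReal.ofReal (Real.exp ((n:ℝ) + 1)) * (ENNReal.ofReal r * Ψ r) :=
                    mul_assoc _ _ _
          _ = ENNReal.ofReal (Real.exp ((n:ℝ) + 1)) * ∫⁻ r in I n, ENNReal.ofReal r * Ψ r :=
              lintegral_const_mul' _ _ ENNReal.ofReal_ne_top
          _ ≤ ENNReal.ofReal (Real.exp ((n:ℝ) + 1)) * B :=
              mul_le_mul_right (lintegral_mono_set (hIsub n)) _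
      have h3 : ENNReal.ofReal (Real.exp ((n:ℝ) + 1)) * B
          ≤ ENNReal.ofReal (τs n) * ENNReal.ofReal (Real.exp (-(n:ℝ)) * κ) := by
        have hBle : B ≤ ENNReal.ofReal (B.toReal + 1) := by
          conv_lhs => rw [← ENNReal.ofReal_toReal hB]
          exact ENNReal.ofReal_le_ofReal (by linarith)
        calc ENNReal.ofReal (Real.exp ((n:ℝ) + 1)) * B
            ≤ ENNReal.ofReal (Real.exp ((n:ℝ) + 1)) * ENNReal.ofReal (B.toReal + 1) :=
              mul_le_mul_right hBle _
          _ = ENNReal.ofReal (Real.exp ((n:ℝ) + 1) * (B.toReal + 1)) :=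
              (ENNReal.ofReal_mul (Real.exp_pos _).le).symm
          _ ≤ ENNReal.ofReal (τs n * (Real.exp (-(n:ℝ)) * κ)) := by
              apply ENNReal.ofReal_le_ofReal
              simp only [hτdef]
              have he1 : Real.exp ((n:ℝ) + 1) = Real.exp (n:ℝ) * Real.exp 1 := by
                rw [← Real.exp_add]
              have he2 : Real.exp (2 * (n:ℝ)) * Real.exp (-(n:ℝ)) = Real.exp (n:ℝ) := by
                rw [← Real.exp_add]; congr 1; ring
              calc Real.exp ((n:ℝ) + 1) * (B.toReal + 1)
                  = Real.exp (n:ℝ) * (Real.exp 1 * (B.toReal + 1)) := by rw [he1]; ring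
                _ ≤ Real.exp (n:ℝ) * (T * κ) :=
                    mul_le_mul_of_nonneg_left hTκ (Real.exp_pos _).le
                _ = T * Real.exp (2 * (n:ℝ)) * (Real.exp (-(n:ℝ)) * κ) := by
                    rw [← he2]; ring
          _ = ENNReal.ofReal (τs n) * ENNReal.ofReal (Real.exp (-(n:ℝ)) * κ) :=
              ENNReal.ofReal_mul (hτpos n).le
      have h4 := le_trans h1 (le_trans h2 h3)
      exact (ENNReal.mul_le_mul_iff_right
        (by rw [ne_eq, ENNReal.ofReal_eq_zero, not_le]; exact hτpos n)
        ENNReal.ofReal_ne_top).mp h4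
    have hgood : ∀ n : ℕ, ENNReal.ofReal (Real.exp (-(n:ℝ)) * κ)
        ≤ volume (I n ∩ {x | Ψ x < ENNReal.ofReal (τs n)}) := by
      intro n
      have hbadmeas : MeasurableSet {x | ENNReal.ofReal (τs n) ≤ Ψ x} :=
        measurableSet_le measurable_const hΨmeas
      have hcover : volume (I n) ≤ volume (I n ∩ {x | Ψ x < ENNReal.ofReal (τs n)})
          + volume ({x | ENNReal.ofReal (τs n) ≤ Ψ x} ∩ I n) := by
        have hsub2 : I n ⊆ (I n ∩ {x | Ψ x < ENNReal.ofReal (τs n)})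
            ∪ ({x | ENNReal.ofReal (τs n) ≤ Ψ x} ∩ I n) := by
          intro x hx
          rcases lt_or_ge (Ψ x) (ENNReal.ofReal (τs n)) with h | h
          · exact Or.inl ⟨hx, h⟩
          · exact Or.inr ⟨h, hx⟩
        exact le_trans (measure_mono hsub2) (measure_union_le _ _)
      have hbad' : volume ({x | ENNReal.ofReal (τs n) ≤ Ψ x} ∩ I n)
          ≤ ENNReal.ofReal (Real.exp (-(n:ℝ)) * κ) := by
        rw [← Measure.restrict_apply hbadmeas]
        exact hcheb n
      rw [hμI n] at hcover
      have hfin := le_trans hcover (add_le_add_right hbad' _)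
      exact (ENNReal.add_le_add_iff_right ENNReal.ofReal_ne_top).mp hfin
    have hann : ∀ n : ℕ, (g n)⁻¹ * ENNReal.ofReal κ
        ≤ ∫⁻ r in I n, 1 / ENNReal.ofReal (r * q r) := by
      intro n
      set a := ENNReal.ofReal (Real.exp (-(n:ℝ))) with hadef
      have ha0 : a ≠ 0 := by
        rw [hadef, ne_eq, ENNReal.ofReal_eq_zero, not_le]; exact Real.exp_pos _
      have hgoodmeas : MeasurableSet (I n ∩ {x | Ψ x < ENNReal.ofReal (τs n)}) :=
        (hImeas n).inter (measurableSet_lt hΨmeas measurable_const)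
      have hptw : ∀ r ∈ I n ∩ {x | Ψ x < ENNReal.ofReal (τs n)},
          (a * g n)⁻¹ ≤ 1 / ENNReal.ofReal (r * q r) := by
        rintro r ⟨hrI, hrΨ⟩
        rw [one_div]
        apply ENNReal.inv_le_inv'
        have hr0 : 0 < r := lt_trans (Real.exp_pos _) hrI.1
        rw [ENNReal.ofReal_mul hr0.le]
        apply mul_le_mul'
        · exact ENNReal.ofReal_le_ofReal hrI.2.le
        · apply CMIaux.le_genInvR Φ hΦmono (hqnn r)
          have hlt := hrΨ
          rw [Set.mem_setOf_eq, hΨq r] at hlt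
          exact (ENNReal.ofReal_lt_ofReal_iff_of_nonneg (hΦpos _ (hqnn r))).mp hlt
      calc (g n)⁻¹ * ENNReal.ofReal κ
          = (a * g n)⁻¹ * (a * ENNReal.ofReal κ) :=
            (CMIaux.alg a (g n) _ ha0 ENNReal.ofReal_ne_top).symm
        _ = (a * g n)⁻¹ * ENNReal.ofReal (Real.exp (-(n:ℝ)) * κ) := by
            rw [hadef, ← ENNReal.ofReal_mul (Real.exp_pos _).le]
        _ ≤ (a * g n)⁻¹ * volume (I n ∩ {x | Ψ x < ENNReal.ofReal (τs n)}) :=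
            mul_le_mul_right (hgood n) _
        _ = ∫⁻ _ in I n ∩ {x | Ψ x < ENNReal.ofReal (τs n)}, (a * g n)⁻¹ :=
            (setLIntegral_const _ _).symm
        _ ≤ ∫⁻ r in I n ∩ {x | Ψ x < ENNReal.ofReal (τs n)}, 1 / ENNReal.ofReal (r * q r) := by
            apply lintegral_mono_ae
            filter_upwards [ae_restrict_mem hgoodmeas] with r hr using hptw r hr
        _ ≤ ∫⁻ r in I n, 1 / ENNReal.ofReal (r * q r) :=
            lintegral_mono_set Set.inter_subset_left
    calc ENNReal.ofReal κ * ∑' n, (g n)⁻¹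
        = ∑' n, (g n)⁻¹ * ENNReal.ofReal κ := by rw [ENNReal.tsum_mul_right, mul_comm]
      _ ≤ ∑' n, ∫⁻ r in I n, 1 / ENNReal.ofReal (r * q r) := ENNReal.tsum_le_tsum hann
      _ = ∫⁻ r in ⋃ n, I n, 1 / ENNReal.ofReal (r * q r) :=
          (lintegral_iUnion hImeas hdisj _).symm
      _ ≤ ∫⁻ r in Set.Ioo (0:ℝ) 1, 1 / ENNReal.ofReal (r * q r) :=
          lintegral_mono_set (Set.iUnion_subset hIsub)
  rw [hdivsum, ENNReal.mul_top
    (by rw [ne_eq, ENNReal.ofReal_eq_zero, not_le]; exact hκ)] at hlower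
  exact top_le_iff.mp hlower
end

section
/- Suppose Q: 𝔹 → [0,∞] is measurable and ∫_{𝔹 ∩ U} e^{αQ(z)} dxdy < ∞ for some α > 0 and a neighborhood U of 0. Then ∫_0^{r₀} dr / (r q(r)) = ∞ for sufficiently small r₀ > 0, where q(r) denotes the average of Q over the circle |z| = r. -/
open MeasureTheory ENNReal Metric Real Set


lemma loglog_diverge {r₀ : ℝ} (h0 : 0 < r₀) (h1 : r₀ ≤ Real.exp (-1)) :
    ∫⁻ r in Set.Ioo (0:ℝ) r₀, ENNReal.ofReal (r * Real.log r⁻¹)⁻¹ = ∞ := by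
  set I := ∫⁻ r in Set.Ioo (0:ℝ) r₀, ENNReal.ofReal (r * Real.log r⁻¹)⁻¹ with hI
  by_contra h
  have hIlt : I < ∞ := lt_top_iff_ne_top.2 h
  have hr1 : r₀ < 1 := lt_of_le_of_lt h1 (by
    rw [Real.exp_lt_one_iff]; norm_num)
  have hL0 : (1:ℝ) ≤ Real.log r₀⁻¹ := by
    rw [Real.log_inv]
    have := Real.log_le_log (by positivity) h1
    rw [Real.log_exp] at this
    linarith
  have hL0pos : (0:ℝ) < Real.log r₀⁻¹ := by linarith
  set M := I.toReal with hM
  set T := M + 1 + Real.log (Real.log r₀⁻¹) with hT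
  set a := Real.exp (-(Real.exp T)) with ha
  have ha0 : 0 < a := Real.exp_pos _
  have hTlog : Real.log (Real.log r₀⁻¹) ≤ T := by
    have : (0:ℝ) ≤ M := ENNReal.toReal_nonneg
    simp only [hT]; linarith
  have har : a ≤ r₀ := by
    have h2 : Real.log r₀⁻¹ ≤ Real.exp T := by
      calc Real.log r₀⁻¹ = Real.exp (Real.log (Real.log r₀⁻¹)) := (Real.exp_log hL0pos).symm
        _ ≤ Real.exp T := Real.exp_le_exp.2 hTlog
    calc a ≤ Real.exp (Real.log r₀) := Real.exp_le_exp.2 (by rw [Real.log_inv] at h2; linarith)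
      _ = r₀ := Real.exp_log h0
  -- positivity of log r⁻¹ on the interval
  have hlogpos : ∀ x ∈ Set.Icc a r₀, 0 < Real.log x⁻¹ := by
    intro x hx
    rw [Real.log_inv]
    have : x < 1 := lt_of_le_of_lt hx.2 hr1
    have hx0 : 0 < x := lt_of_lt_of_le ha0 hx.1
    simpa using Real.log_neg hx0 this
  have hcont : ContinuousOn (fun r : ℝ => (r * Real.log r⁻¹)⁻¹) (Set.Icc a r₀) := by
    intro x hx
    have hx0 : 0 < x := lt_of_lt_of_le ha0 hx.1
    have hlp := hlogpos x hx
    apply ContinuousAt.continuousWithinAt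
    have h1 : ContinuousAt (fun r : ℝ => r * Real.log r⁻¹) x := by
      apply continuousAt_id.mul
      exact (Real.continuousAt_log (inv_ne_zero hx0.ne')).comp (continuousAt_inv₀ hx0.ne')
    exact h1.inv₀ (by positivity)
  have hderiv : ∀ x ∈ Set.uIcc a r₀, HasDerivAt (fun r : ℝ => -Real.log (Real.log r⁻¹))
      ((x * Real.log x⁻¹)⁻¹) x := by
    intro x hx
    rw [Set.uIcc_of_le har] at hx
    have hx0 : 0 < x := lt_of_lt_of_le ha0 hx.1
    have hlp := hlogpos x hx
    have d1 : HasDerivAt (fun r : ℝ => Real.log r⁻¹) (-x⁻¹) x := by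
      have := ((hasDerivAt_inv hx0.ne').log (inv_ne_zero hx0.ne'))
      convert this using 1
      field_simp
    have d2 : HasDerivAt (fun r : ℝ => -Real.log (Real.log r⁻¹)) (-(-x⁻¹ / Real.log x⁻¹)) x :=
      (d1.log hlp.ne').neg
    convert d2 using 1
    rw [neg_div, neg_neg, div_eq_mul_inv, mul_inv]
  have hii : IntervalIntegrable (fun r : ℝ => (r * Real.log r⁻¹)⁻¹) volume a r₀ := by
    apply ContinuousOn.intervalIntegrable
    rwa [Set.uIcc_of_le har]
  have hval := intervalIntegral.integral_eq_sub_of_hasDerivAt hderiv hii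
  have hFa : Real.log a⁻¹ = Real.exp T := by
    rw [ha, ← Real.exp_neg, Real.log_exp, neg_neg]
  have hFa2 : Real.log (Real.log a⁻¹) = T := by rw [hFa, Real.log_exp]
  have hvalue : ∫ r in a..r₀, (r * Real.log r⁻¹)⁻¹ = M + 1 := by
    rw [hval, hFa2, hT]
    ring
  -- compare with lintegral
  have hnonneg : 0 ≤ᵐ[volume.restrict (Set.Ioo a r₀)] fun r : ℝ => (r * Real.log r⁻¹)⁻¹ := by
    filter_upwards [ae_restrict_mem measurableSet_Ioo] with x hx
    have := hlogpos x ⟨hx.1.le, hx.2.le⟩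
    have hx0 : 0 < x := lt_of_lt_of_le ha0 hx.1.le
    positivity
  have hint : IntegrableOn (fun r : ℝ => (r * Real.log r⁻¹)⁻¹) (Set.Ioo a r₀) volume := by
    apply (hcont.integrableOn_compact isCompact_Icc).mono_set Set.Ioo_subset_Icc_self
  have hle : ENNReal.ofReal (M + 1) ≤ I := by
    calc ENNReal.ofReal (M + 1)
        = ENNReal.ofReal (∫ r in Set.Ioo a r₀, (r * Real.log r⁻¹)⁻¹) := by
          rw [← hvalue, intervalIntegral.integral_of_le har, integral_Ioc_eq_integral_Ioo]
      _ = ∫⁻ r in Set.Ioo a r₀, ENNReal.ofReal (r * Real.log r⁻¹)⁻¹ :=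
          ofReal_integral_eq_lintegral_ofReal hint hnonneg
      _ ≤ I := lintegral_mono_set (fun x hx => ⟨lt_of_lt_of_le ha0 hx.1.le |>.trans_le le_rfl, hx.2⟩)
  have : I < ENNReal.ofReal (M + 1) := by
    rw [hM]
    calc I = ENNReal.ofReal I.toReal := (ENNReal.ofReal_toReal h).symm
      _ < ENNReal.ofReal (I.toReal + 1) := by
          rw [ENNReal.ofReal_lt_ofReal_iff (by positivity)]; linarith
  exact absurd (lt_of_le_of_lt hle this) (lt_irrefl _)


lemma polar_lintegral_le (g : ℂ → ℝ≥0∞) (hg : Measurable g) {R : ℝ} (hR : 0 < R) :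
    ∫⁻ r in Set.Ioo (0:ℝ) R,
      (ENNReal.ofReal r) * ∫⁻ θ in Set.Ioo (-π) π, g ((r:ℂ) * Complex.exp (θ * Complex.I)) ≤
    ∫⁻ z in ball (0:ℂ) R, g z := by
  set cmap : ℝ × ℝ → ℂ := fun p => (p.1 : ℂ) * Complex.exp (p.2 * Complex.I) with hcmapdef
  have hcmap_cont : Continuous cmap := by
    apply Continuous.mul
    · exact Complex.continuous_ofReal.comp continuous_fst
    · exact Complex.continuous_exp.comp
        ((Complex.continuous_ofReal.comp continuous_snd).mul continuous_const)
  have hkey : ∀ p : ℝ × ℝ, Complex.measurableEquivRealProd.symm (polarCoord.symm p) = cmap p := by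
    intro p
    rw [Complex.measurableEquivRealProd_symm_apply]
    simp only [polarCoord_symm_apply, hcmapdef]
    rw [Complex.exp_mul_I]
    apply Complex.ext <;>
      simp [Complex.cos_ofReal_re, Complex.sin_ofReal_re]
  have hkey2 : ∀ p : ℝ × ℝ, Complex.measurableEquivRealProd.symm (polarCoord.symm p)
      = Complex.polarCoord.symm p := by
    intro p
    rw [hkey, Complex.polarCoord_symm_apply]
    simp [hcmapdef, Complex.exp_mul_I, Complex.ofReal_cos, Complex.ofReal_sin]
  set s : Set (ℝ × ℝ) := Set.Ioo (0:ℝ) R ×ˢ Set.Ioo (-π) π with hs_def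
  have hs : MeasurableSet s := measurableSet_Ioo.prod measurableSet_Ioo
  have hsub : s ⊆ polarCoord.target := by
    rintro ⟨r, θ⟩ ⟨h1, h2⟩
    exact ⟨h1.1, h2⟩
  set B : ℝ × ℝ → ℝ × ℝ →L[ℝ] ℝ × ℝ := fun p =>
    LinearMap.toContinuousLinearMap (Matrix.toLin (Module.Basis.finTwoProd ℝ) (Module.Basis.finTwoProd ℝ)
      !![Real.cos p.2, -p.1 * Real.sin p.2; Real.sin p.2, p.1 * Real.cos p.2]) with hB
  have hBderiv : ∀ p ∈ s, HasFDerivWithinAt polarCoord.symm (B p) s p := fun p _ =>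
    (hasFDerivAt_polarCoord_symm p).hasFDerivWithinAt
  have hBdet : ∀ p, (B p).det = p.1 := by
    intro p
    conv_rhs => rw [← one_mul p.1, ← Real.cos_sq_add_sin_sq p.2]
    simp only [hB, neg_mul, LinearMap.det_toContinuousLinearMap, LinearMap.det_toLin,
      Matrix.det_fin_two_of, sub_neg_eq_add]
    ring
  have hinj : Set.InjOn polarCoord.symm s := by
    have := polarCoord.symm.injOn
    exact this.mono (by rw [OpenPartialHomeomorph.symm_source]; exact hsub)
  have e_mp := Complex.volume_preserving_equiv_real_prod.symm
  calc ∫⁻ r in Set.Ioo (0:ℝ) R,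
      (ENNReal.ofReal r) * ∫⁻ θ in Set.Ioo (-π) π, g ((r:ℂ) * Complex.exp (θ * Complex.I))
      = ∫⁻ p in s, ENNReal.ofReal p.1 * g (cmap p) := by
        have hmeas : Measurable fun p : ℝ × ℝ => ENNReal.ofReal p.1 * g (cmap p) := by
          apply Measurable.mul
          · exact measurable_ofReal.comp measurable_fst
          · exact hg.comp hcmap_cont.measurable
        rw [hs_def, Measure.volume_eq_prod, ← Measure.prod_restrict,
          lintegral_prod _ hmeas.aemeasurable]
        exact lintegral_congr fun r => (lintegral_const_mul' _ _ ofReal_ne_top).symm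
    _ = ∫⁻ p in s, ENNReal.ofReal |(B p).det|
          * ((g ∘ Complex.measurableEquivRealProd.symm) (polarCoord.symm p)) := by
        apply setLIntegral_congr_fun hs
        rintro ⟨r, θ⟩ ⟨h1, _⟩
        beta_reduce
        rw [hBdet, abs_of_pos h1.1, Function.comp_apply, hkey]
    _ = ∫⁻ x in polarCoord.symm '' s, (g ∘ Complex.measurableEquivRealProd.symm) x :=
        (lintegral_image_eq_lintegral_abs_det_fderiv_mul volume hs hBderiv hinj _).symm
    _ = ∫⁻ z in Complex.measurableEquivRealProd.symm '' (polarCoord.symm '' s), g z := by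
        exact e_mp.setLIntegral_comp_emb
          (MeasurableEquiv.measurableEmbedding _) g _
    _ ≤ ∫⁻ z in ball (0:ℂ) R, g z := by
        apply lintegral_mono_set
        rintro z ⟨x, ⟨p, hp, rfl⟩, rfl⟩
        rw [mem_ball, Complex.dist_eq, sub_zero, hkey2, Complex.norm_polarCoord_symm,
          abs_of_pos]
        · exact hp.1.2
        · exact hp.1.1


lemma jensen_step (Q : ℂ → ℝ) (hQmeas : Measurable Q) (hQpos : ∀ z, 0 ≤ Q z)
    {α : ℝ} (hα : 0 < α) {r : ℝ} (hr : 0 < r)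
    (hF : ∫⁻ θ in Set.Ioo (-π) π,
        ENNReal.ofReal (Real.exp (α * Q (r * Complex.exp (θ * Complex.I)))) ≠ ∞) :
    ENNReal.ofReal (2 * π * Real.exp (α * ((2 * π)⁻¹ *
        ∫ θ in (0:ℝ)..(2 * π), Q (r * Complex.exp (θ * Complex.I))))) ≤
      ∫⁻ θ in Set.Ioo (-π) π,
        ENNReal.ofReal (Real.exp (α * Q (r * Complex.exp (θ * Complex.I)))) := by
  set f : ℝ → ℝ := fun θ => Q (r * Complex.exp (θ * Complex.I)) with hf_def
  have hf_cont : Measurable f := by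
    apply hQmeas.comp
    exact (Complex.continuous_ofReal.comp continuous_const |>.mul
      (Complex.continuous_exp.comp (Complex.continuous_ofReal.mul continuous_const))).measurable
  have hper : Function.Periodic f (2 * π) := by
    intro θ
    simp only [hf_def]
    congr 2
    push_cast
    rw [add_mul, Complex.exp_add, Complex.exp_two_pi_mul_I, mul_one]
  set μ := volume.restrict (Set.Ioo (-π) π) with hμ
  have hμuniv : μ Set.univ = ENNReal.ofReal (2 * π) := by
    rw [hμ, Measure.restrict_apply_univ, Real.volume_Ioo]
    congr 1
    ring
  haveI : IsFiniteMeasure μ := ⟨by rw [hμuniv]; exact ofReal_lt_top⟩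
  haveI : NeZero μ := by
    refine ⟨fun h0 => ?_⟩
    have := hμuniv
    rw [h0] at this
    simp only [Measure.coe_zero, Pi.zero_apply] at this
    have h4 := ENNReal.ofReal_eq_zero.1 this.symm
    linarith [Real.pi_pos]
  -- integral over one period
  have hint : ∫ θ in (0:ℝ)..(2 * π), f θ = ∫ θ, f θ ∂μ := by
    have h1 : ∫ θ in (0:ℝ)..(2 * π), f θ = ∫ θ in (-π)..(-π + 2 * π), f θ := by
      have := hper.intervalIntegral_add_eq 0 (-π)
      simpa using this
    rw [h1, hμ]
    have h2 : -π + 2 * π = π := by ring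
    rw [h2, intervalIntegral.integral_of_le (by linarith [Real.pi_pos]),
      integral_Ioc_eq_integral_Ioo]
  have hexp_int : Integrable (fun θ => Real.exp (α * f θ)) μ := by
    constructor
    · exact ((Real.continuous_exp.measurable).comp
        ((measurable_const.mul hf_cont))).aestronglyMeasurable
    · rw [hasFiniteIntegral_iff_ofReal (ae_of_all _ fun θ => (Real.exp_pos _).le)]
      exact lt_top_iff_ne_top.2 hF
  have hf_int : Integrable f μ := by
    apply Integrable.mono' (hexp_int.const_mul α⁻¹) hf_cont.aestronglyMeasurable
    apply ae_of_all
    intro θ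
    rw [Real.norm_of_nonneg (hQpos _)]
    have h2 : α * f θ ≤ Real.exp (α * f θ) := by
      have := Real.add_one_le_exp (α * f θ); linarith
    have h3 := mul_le_mul_of_nonneg_left h2 (inv_nonneg.2 hα.le)
    rwa [inv_mul_cancel_left₀ hα.ne'] at h3
  have hjen := convexOn_exp.map_average_le Real.continuous_exp.continuousOn isClosed_univ
    (ae_of_all _ fun θ : ℝ => Set.mem_univ (α * f θ)) (hf_int.const_mul α)
    hexp_int
  rw [average_eq, average_eq, measureReal_def, hμuniv, ENNReal.toReal_ofReal (by positivity),
    integral_const_mul, smul_eq_mul, smul_eq_mul] at hjen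
  -- hjen : exp ((2π)⁻¹ * (α * ∫ f ∂μ)) ≤ (2π)⁻¹ * ∫ exp (α f) ∂μ
  have h2pi : (0:ℝ) < 2 * π := by positivity
  have hmain : 2 * π * Real.exp (α * ((2 * π)⁻¹ * ∫ θ in (0:ℝ)..(2 * π), f θ))
      ≤ ∫ θ, Real.exp (α * f θ) ∂μ := by
    rw [hint]
    have : α * ((2 * π)⁻¹ * ∫ θ, f θ ∂μ) = (2 * π)⁻¹ * (α * ∫ θ, f θ ∂μ) := by ring
    rw [this]
    calc 2 * π * Real.exp ((2 * π)⁻¹ * (α * ∫ θ, f θ ∂μ))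
        ≤ 2 * π * ((2 * π)⁻¹ * ∫ θ, Real.exp (α * f θ) ∂μ) :=
          mul_le_mul_of_nonneg_left hjen h2pi.le
      _ = ∫ θ, Real.exp (α * f θ) ∂μ := by field_simp
  calc ENNReal.ofReal (2 * π * Real.exp (α * ((2 * π)⁻¹ *
          ∫ θ in (0:ℝ)..(2 * π), Q (r * Complex.exp (θ * Complex.I)))))
      ≤ ENNReal.ofReal (∫ θ, Real.exp (α * f θ) ∂μ) := ENNReal.ofReal_le_ofReal hmain
    _ = ∫⁻ θ, ENNReal.ofReal (Real.exp (α * f θ)) ∂μ :=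
        ofReal_integral_eq_lintegral_ofReal hexp_int (ae_of_all _ fun θ => (Real.exp_pos _).le)

/-- If `Q : 𝔹 → [0,∞)` is measurable and `e^{αQ}` is integrable on `𝔹 ∩ U` for
some `α > 0` and a neighborhood `U` of `0`, then `∫_0^{r₀} dr/(r q(r)) = ∞` for
all sufficiently small `r₀ > 0`, where `q(r)` is the mean of `Q` over `|z|=r`. -/
theorem circular_means_integral_infinite_of_exp_integrable
    (Q : ℂ → ℝ) (hQmeas : Measurable Q) (hQpos : ∀ z, 0 ≤ Q z)
    (hexp : ∃ α : ℝ, 0 < α ∧ ∃ U : Set ℂ, U ∈ nhds (0 : ℂ) ∧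
      ∫⁻ z in ball (0 : ℂ) 1 ∩ U, ENNReal.ofReal (Real.exp (α * Q z)) < ∞) :
    ∃ r₁ : ℝ, 0 < r₁ ∧ ∀ r₀ : ℝ, 0 < r₀ → r₀ ≤ r₁ →
      ∫⁻ r in Set.Ioo (0 : ℝ) r₀,
        1 / ENNReal.ofReal
          (r * ((2 * Real.pi)⁻¹ *
            ∫ θ in (0 : ℝ)..(2 * Real.pi), Q (r * Complex.exp (θ * Complex.I)))) = ∞ := by
  obtain ⟨α, hα, U, hU, hfin⟩ := hexp
  obtain ⟨ε, hε, hball⟩ := Metric.mem_nhds_iff.1 hU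
  set r₁ : ℝ := min (min (ε/2) (Real.exp (-1))) (1/2) with hr₁def
  have hr₁pos : 0 < r₁ :=
    lt_min (lt_min (by positivity) (Real.exp_pos _)) (by norm_num)
  have hr₁exp : r₁ ≤ Real.exp (-1) := le_trans (min_le_left _ _) (min_le_right _ _)
  refine ⟨r₁, hr₁pos, ?_⟩
  intro r₀ h0 h01
  set g : ℂ → ℝ≥0∞ := fun z => ENNReal.ofReal (Real.exp (α * Q z)) with hg_def
  have hgmeas : Measurable g :=
    measurable_ofReal.comp (Real.continuous_exp.measurable.comp (measurable_const.mul hQmeas))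
  set cmap : ℝ × ℝ → ℂ := fun p => (p.1 : ℂ) * Complex.exp (p.2 * Complex.I) with hcmap_def
  have hcmap_cont : Continuous cmap := by
    apply Continuous.mul
    · exact Complex.continuous_ofReal.comp continuous_fst
    · exact Complex.continuous_exp.comp
        ((Complex.continuous_ofReal.comp continuous_snd).mul continuous_const)
  set F : ℝ → ℝ≥0∞ := fun r =>
    ∫⁻ θ in Set.Ioo (-π) π, g ((r:ℂ) * Complex.exp (θ * Complex.I)) with hF_def
  have hFmeas : Measurable F := by
    have : Measurable fun p : ℝ × ℝ => g (cmap p) := hgmeas.comp hcmap_cont.measurable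
    exact Measurable.lintegral_prod_right' (ν := volume.restrict (Set.Ioo (-π) π)) this
  have hGmeas : Measurable fun r : ℝ => ENNReal.ofReal r * F r :=
    (measurable_ofReal.comp measurable_id).mul hFmeas
  have hGfin : ∫⁻ r in Set.Ioo (0:ℝ) r₁, ENNReal.ofReal r * F r < ∞ := by
    refine lt_of_le_of_lt (polar_lintegral_le g hgmeas hr₁pos) ?_
    refine lt_of_le_of_lt (lintegral_mono_set ?_) hfin
    intro z hz
    rw [mem_ball, Complex.dist_eq, sub_zero] at hz
    constructor
    · rw [mem_ball, Complex.dist_eq, sub_zero]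
      calc ‖z‖ < r₁ := hz
        _ ≤ 1/2 := min_le_right _ _
        _ < 1 := by norm_num
    · apply hball
      rw [mem_ball, Complex.dist_eq, sub_zero]
      calc ‖z‖ < r₁ := hz
        _ ≤ ε/2 := le_trans (min_le_left _ _) (min_le_left _ _)
        _ < ε := by linarith
  -- a.e. finiteness of F on (0, r₀)
  have hae1 : ∀ᵐ r ∂(volume.restrict (Set.Ioo (0:ℝ) r₁)), ENNReal.ofReal r * F r < ∞ :=
    ae_lt_top hGmeas hGfin.ne
  have hae2 : ∀ᵐ r ∂(volume.restrict (Set.Ioo (0:ℝ) r₀)), ENNReal.ofReal r * F r < ∞ :=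
    ae_restrict_of_ae_restrict_of_subset (Set.Ioo_subset_Ioo le_rfl h01) hae1
  set c : ℝ≥0∞ := ENNReal.ofReal (α/2) * (ENNReal.ofReal (2*π))⁻¹ with hc_def
  have h2πpos : (0:ℝ) < 2*π := by positivity
  have h2πne0 : ENNReal.ofReal (2*π) ≠ 0 := (ENNReal.ofReal_pos.2 h2πpos).ne'
  have hcne : c ≠ ∞ := ENNReal.mul_ne_top ofReal_ne_top (ENNReal.inv_ne_top.2 h2πne0)
  set q : ℝ → ℝ := fun r =>
    (2 * Real.pi)⁻¹ * ∫ θ in (0:ℝ)..(2 * Real.pi), Q (r * Complex.exp (θ * Complex.I))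
    with hq_def
  have hptwise : ∀ᵐ r ∂(volume.restrict (Set.Ioo (0:ℝ) r₀)),
      ENNReal.ofReal (α/2 * (r * Real.log r⁻¹)⁻¹) ≤
        1 / ENNReal.ofReal (r * q r) + c * (ENNReal.ofReal r * F r) := by
    filter_upwards [hae2, ae_restrict_mem measurableSet_Ioo] with r hlt hmem
    have hr0 : 0 < r := hmem.1
    have hrexp : r ≤ Real.exp (-1) := le_trans (le_trans hmem.2.le h01) hr₁exp
    have hL : 1 ≤ Real.log r⁻¹ := by
      rw [Real.log_inv]
      have := Real.log_le_log hr0 hrexp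
      rw [Real.log_exp] at this
      linarith
    have hLpos : 0 < Real.log r⁻¹ := by linarith
    have hFfin : F r ≠ ∞ := by
      intro h
      rw [h, ENNReal.mul_top (ENNReal.ofReal_pos.2 hr0).ne'] at hlt
      exact absurd hlt (lt_irrefl _)
    have hq0 : 0 ≤ q r := by
      apply mul_nonneg (by positivity)
      exact intervalIntegral.integral_nonneg (by positivity) fun x _ => hQpos _
    by_cases hcase : q r ≤ 2/α * Real.log r⁻¹
    · -- small mean case
      have hy : r * q r ≤ 2/α * (r * Real.log r⁻¹) := by
        have := mul_le_mul_of_nonneg_left hcase hr0.le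
        nlinarith
      have hypos : 0 < 2/α * (r * Real.log r⁻¹) := by positivity
      have hmain : ENNReal.ofReal (α/2 * (r * Real.log r⁻¹)⁻¹) ≤
          1 / ENNReal.ofReal (r * q r) := by
        calc ENNReal.ofReal (α/2 * (r * Real.log r⁻¹)⁻¹)
            = 1 / ENNReal.ofReal (2/α * (r * Real.log r⁻¹)) := by
              rw [one_div, ← ENNReal.ofReal_inv_of_pos hypos]
              congr 1
              field_simp
          _ ≤ 1 / ENNReal.ofReal (r * q r) := by
              simp only [one_div]
              exact ENNReal.inv_le_inv' (ENNReal.ofReal_le_ofReal hy)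
      exact hmain.trans le_self_add
    · -- large mean case
      push_neg at hcase
      have hjen := jensen_step Q hQmeas hQpos hα hr0 hFfin
      have hexp2 : 2*π * (r⁻¹ * r⁻¹) ≤ 2*π * Real.exp (α * q r) := by
        apply mul_le_mul_of_nonneg_left _ h2πpos.le
        have h1 : Real.exp (Real.log r⁻¹ + Real.log r⁻¹) ≤ Real.exp (α * q r) := by
          apply Real.exp_le_exp.2
          have hmul := mul_lt_mul_of_pos_left hcase hα
          have hsimp : α * (2 / α * Real.log r⁻¹) = 2 * Real.log r⁻¹ := by field_simp
          rw [hsimp] at hmul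
          linarith
        rw [Real.exp_add, Real.exp_log (inv_pos.2 hr0)] at h1
        exact h1
      have hG : ENNReal.ofReal (2*π * r⁻¹) ≤ ENNReal.ofReal r * F r := by
        calc ENNReal.ofReal (2*π*r⁻¹)
            = ENNReal.ofReal r * ENNReal.ofReal (2*π*(r⁻¹*r⁻¹)) := by
              rw [← ENNReal.ofReal_mul hr0.le]
              congr 1
              field_simp
          _ ≤ ENNReal.ofReal r * ENNReal.ofReal (2*π*Real.exp (α * q r)) :=
              mul_le_mul_right (ENNReal.ofReal_le_ofReal hexp2) _
          _ ≤ ENNReal.ofReal r * F r := mul_le_mul_right hjen _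
      have hcancel : (ENNReal.ofReal (2*π))⁻¹ * ENNReal.ofReal (2*π*r⁻¹)
          = ENNReal.ofReal r⁻¹ := by
        rw [ENNReal.ofReal_mul h2πpos.le, ← mul_assoc,
          ENNReal.inv_mul_cancel h2πne0 ofReal_ne_top, one_mul]
      have hmain : ENNReal.ofReal (α/2 * (r * Real.log r⁻¹)⁻¹) ≤
          c * (ENNReal.ofReal r * F r) := by
        calc ENNReal.ofReal (α/2 * (r * Real.log r⁻¹)⁻¹)
            ≤ ENNReal.ofReal (α/2 * r⁻¹) := by
              apply ENNReal.ofReal_le_ofReal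
              apply mul_le_mul_of_nonneg_left _ (by positivity : (0:ℝ) ≤ α/2)
              rw [mul_comm]
              rw [mul_inv]
              calc (Real.log r⁻¹)⁻¹ * r⁻¹ ≤ 1 * r⁻¹ := by
                    apply mul_le_mul_of_nonneg_right _ (by positivity)
                    exact inv_le_one_of_one_le₀ hL
                _ = r⁻¹ := one_mul _
          _ = ENNReal.ofReal (α/2) * ((ENNReal.ofReal (2*π))⁻¹ * ENNReal.ofReal (2*π*r⁻¹)) := by
              rw [hcancel, ← ENNReal.ofReal_mul (by positivity)]
          _ ≤ ENNReal.ofReal (α/2) * ((ENNReal.ofReal (2*π))⁻¹ * (ENNReal.ofReal r * F r)) :=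
              mul_le_mul_right (mul_le_mul_right hG _) _
          _ = c * (ENNReal.ofReal r * F r) := by rw [hc_def, mul_assoc]
      exact hmain.trans le_add_self
  -- put everything together
  have hdiv : ∫⁻ r in Set.Ioo (0:ℝ) r₀, ENNReal.ofReal (α/2 * (r * Real.log r⁻¹)⁻¹) = ∞ := by
    have h1 : ∀ r : ℝ, ENNReal.ofReal (α/2 * (r * Real.log r⁻¹)⁻¹)
        = ENNReal.ofReal (α/2) * ENNReal.ofReal ((r * Real.log r⁻¹)⁻¹) := fun r =>
      ENNReal.ofReal_mul (by positivity)
    simp_rw [h1]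
    rw [lintegral_const_mul' _ _ ofReal_ne_top, loglog_diverge h0 (le_trans h01 hr₁exp)]
    exact ENNReal.mul_top (ENNReal.ofReal_pos.2 (by positivity)).ne'
  have hsum := lintegral_mono_ae hptwise
  rw [lintegral_add_right _ (hGmeas.const_mul c)] at hsum
  have hcG : ∫⁻ r in Set.Ioo (0:ℝ) r₀, c * (ENNReal.ofReal r * F r) < ∞ := by
    rw [lintegral_const_mul' _ _ hcne]
    apply ENNReal.mul_lt_top (lt_top_iff_ne_top.2 hcne)
    exact lt_of_le_of_lt (lintegral_mono_set (Set.Ioo_subset_Ioo le_rfl h01)) hGfin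
  by_contra hmain
  have hmainlt : (∫⁻ r in Set.Ioo (0:ℝ) r₀, 1 / ENNReal.ofReal (r * q r)) < ∞ :=
    lt_top_iff_ne_top.2 hmain
  have : (∞:ℝ≥0∞) < ∞ := by
    calc (∞:ℝ≥0∞) = ∫⁻ r in Set.Ioo (0:ℝ) r₀,
          ENNReal.ofReal (α/2 * (r * Real.log r⁻¹)⁻¹) := hdiv.symm
      _ ≤ _ + _ := hsum
      _ < ∞ := ENNReal.add_lt_top.2 ⟨hmainlt, hcG⟩
  exact absurd this (lt_irrefl _)
end
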